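/- Let f be a Boolean function on k+1 variables that depends on all of them and let Ψ = f(H_{k0},…,H_{kk}). If Φ = Ψ[θ] for a partial assignment θ having at least 4 pairwise independent transversals, then the set of H_k-units of Φ equals the union over 0 ≤ ℓ ≤ k of the sets of units of H_{kℓ}[θ], i.e. U_k(Φ) = ⋃_{ℓ=0}^{k} U(H_{kℓ}[θ]). -/

import Mathlib

/-! ### Basic notions on Boolean functions -/

namespace BF

variable {V : Type}

/-- Restriction `Φ[θ]` of a Boolean function `Φ` by a partial assignment `θ`. -/
def restrict (Φ : (V → Bool) → Bool) (θ : V → Option Bool) : (V → Bool) → Bool :=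
  fun a => Φ (fun v => (θ v).getD (a v))

/-- Combination `θ ∪ μ` of two partial assignments, where `θ` takes priority. -/
def combine (θ μ : V → Option Bool) : V → Option Bool :=
  fun v => (θ v).elim (μ v) some

/-- The partial assignment setting the single variable `X` to `b`. -/
def single [DecidableEq V] (X : V) (b : Bool) : V → Option Bool :=
  fun v => if v = X then some b else none

/-- A term (conjunction of literals, given as a partial assignment) implies `Φ`. -/
def TermImplies (τ : V → Option Bool) (Φ : (V → Bool) → Bool) : Prop :=
  ∀ a : V → Bool, (∀ v b, τ v = some b → a v = b) → Φ a = true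

/-- `τ'` is a subterm (subconjunction) of `τ`. -/
def Subterm (τ' τ : V → Option Bool) : Prop :=
  ∀ v b, τ' v = some b → τ v = some b

/-- `τ` is a prime implicant of `Φ`: it implies `Φ`, and no proper subconjunction does. -/
def IsPrimeImplicant (τ : V → Option Bool) (Φ : (V → Bool) → Bool) : Prop :=
  TermImplies τ Φ ∧ ∀ τ', Subterm τ' τ → τ' ≠ τ → ¬ TermImplies τ' Φ

/-- The variable `X` is a unit of `Φ`: by itself (positively) a prime implicant of `Φ`. -/
def IsUnit [DecidableEq V] (X : V) (Φ : (V → Bool) → Bool) : Prop :=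
  IsPrimeImplicant (single X true) Φ

/-- `Φ` depends on the variable `v`. -/
def DependsOnVar [DecidableEq V] (Φ : (V → Bool) → Bool) (v : V) : Prop :=
  ∃ a : V → Bool, Φ (Function.update a v true) ≠ Φ (Function.update a v false)

/-- The set of units of `Φ`. -/
def unitSet [DecidableEq V] (Φ : (V → Bool) → Bool) : Set V :=
  {X | IsUnit X Φ}

/-- The degree of a variable `X` in `Φ`: the maximum over partial assignments `θ`
(not assigning `X`) of the number of units of `Φ[θ ∪ {X=1}]` that are not units of
`Φ[θ]`. -/
noncomputable def degreeOf [Fintype V] [DecidableEq V] (Φ : (V → Bool) → Bool) (X : V) : ℕ :=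
  sSup { m | ∃ θ : V → Option Bool, θ X = none ∧
    m = (unitSet (restrict Φ (combine (single X true) θ)) \ unitSet (restrict Φ θ)).ncard }

/-- `Δ(Φ)`: the maximum degree of any variable of `Φ`. -/
noncomputable def maxDegree [Fintype V] [DecidableEq V] (Φ : (V → Bool) → Bool) : ℕ :=
  Finset.univ.sup (fun X => degreeOf Φ X)

end BF

/-! ### FBDDs (free binary decision diagrams), possibly multi-output -/

/-- A node of a (multi-output) FBDD: a sink labeled by an output value, or a decision
node labeled by a variable with a 0-edge and a 1-edge (children are given as indices,
which are required to be smaller, guaranteeing acyclicity). -/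
inductive BddNode (V O : Type) where
  | sink (o : O)
  | decision (x : V) (lo hi : ℕ)

/-- A (multi-output) FBDD structure: a rooted DAG with nodes `0, …, size-1`, in
topological order (edges decrease the index).  Freeness (read-once) is the
predicate `FBDD.ReadOnce` below. -/
structure FBDD (V O : Type) where
  size : ℕ
  node : Fin size → BddNode V O
  root : Fin size
  dec : ∀ (i : Fin size) (x : V) (lo hi : ℕ),
      node i = .decision x lo hi → lo < i.1 ∧ hi < i.1

namespace FBDD

variable {V O : Type}

/-- The output computed at node `i` on the total assignment `a`. -/
def evalAt (F : FBDD V O) (a : V → Bool) (i : Fin F.size) : O :=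
  match h : F.node i with
  | .sink o => o
  | .decision x lo hi =>
      have hd := F.dec i x lo hi h
      if a x then F.evalAt a ⟨hi, hd.2.trans i.isLt⟩
      else F.evalAt a ⟨lo, hd.1.trans i.isLt⟩
termination_by i.1
decreasing_by
  · exact hd.2
  · exact hd.1

/-- The output of the FBDD on a total assignment. -/
def eval (F : FBDD V O) (a : V → Bool) : O := F.evalAt a F.root

/-- Edge relation of the underlying DAG. -/
def edge (F : FBDD V O) (i j : Fin F.size) : Prop :=
  ∃ x lo hi, F.node i = .decision x lo hi ∧ (j.1 = lo ∨ j.1 = hi)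

/-- Reachability in the underlying DAG. -/
def reach (F : FBDD V O) : Fin F.size → Fin F.size → Prop :=
  Relation.ReflTransGen F.edge

/-- Node `i` tests the variable `x`. -/
def tests (F : FBDD V O) (i : Fin F.size) (x : V) : Prop :=
  ∃ lo hi, F.node i = .decision x lo hi

/-- The FBDD is free (read-once): along every path from the root, each variable is
tested at most once. -/
def ReadOnce (F : FBDD V O) : Prop :=
  ∀ i c j x, F.reach F.root i → F.tests i x → F.edge i c → F.reach c j →
    ¬ F.tests j x

/-- A single-output FBDD computes the Boolean function `Φ`. -/
def Computes (F : FBDD V Bool) (Φ : (V → Bool) → Bool) : Prop :=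
  ∀ a, F.eval a = Φ a

/-- A multi-output FBDD simultaneously computes the `m` Boolean functions `Φ`. -/
def ComputesAll {m : ℕ} (F : FBDD V (Fin m → Bool)) (Φ : Fin m → (V → Bool) → Bool) : Prop :=
  ∀ a l, F.eval a l = Φ l a

/-- The Boolean function computed by the sub-DAG rooted at node `u`. -/
def funAt (F : FBDD V Bool) (u : Fin F.size) : (V → Bool) → Bool :=
  fun a => F.evalAt a u

/-- The FBDD follows the unit rule: at every (reachable) node `u` whose function has a
unit, the variable tested at `u` is a unit of that function. -/
def FollowsUnitRule [DecidableEq V] (F : FBDD V Bool) : Prop :=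
  ∀ u : Fin F.size, F.reach F.root u → (∃ X, BF.IsUnit X (F.funAt u)) →
    ∀ x, F.tests u x → BF.IsUnit x (F.funAt u)

end FBDD

/-! ### DLDDs (decomposable logic decision diagrams) -/

/-- A node of a DLDD: a sink, a decision node, a NOT-node, or a binary
AND/OR/XOR/EQUIV gate (children given as smaller indices). -/
inductive DlddNode (V : Type) where
  | sink (b : Bool)
  | decision (x : V) (lo hi : ℕ)
  | not (c : ℕ)
  | and (c1 c2 : ℕ)
  | or (c1 c2 : ℕ)
  | xor (c1 c2 : ℕ)
  | equiv (c1 c2 : ℕ)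

/-- The children of a DLDD node. -/
def DlddNode.children {V : Type} : DlddNode V → List ℕ
  | .sink _ => []
  | .decision _ lo hi => [lo, hi]
  | .not c => [c]
  | .and c1 c2 => [c1, c2]
  | .or c1 c2 => [c1, c2]
  | .xor c1 c2 => [c1, c2]
  | .equiv c1 c2 => [c1, c2]

/-- The children of a DLDD node, if it is a binary gate. -/
def DlddNode.gateChildren {V : Type} : DlddNode V → Option (ℕ × ℕ)
  | .and c1 c2 => some (c1, c2)
  | .or c1 c2 => some (c1, c2)
  | .xor c1 c2 => some (c1, c2)
  | .equiv c1 c2 => some (c1, c2)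
  | _ => none

/-- A DLDD structure: a rooted DAG with nodes `0, …, size-1` in topological order.
Freeness and decomposability are the predicates `DLDD.ReadOnce` and
`DLDD.Decomposable` below. -/
structure DLDD (V : Type) where
  size : ℕ
  node : Fin size → DlddNode V
  root : Fin size
  dec : ∀ (i : Fin size), ∀ c ∈ (node i).children, c < i.1

namespace DLDD

variable {V : Type}

/-- The Boolean value computed at node `i` on a total assignment `a`. -/
def evalAt (D : DLDD V) (a : V → Bool) (i : Fin D.size) : Bool :=
  match h : D.node i with
  | .sink b => b
  | .decision x lo hi =>
      have hlo : lo < i.1 := D.dec i lo (by rw [h]; simp [DlddNode.children])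
      have hhi : hi < i.1 := D.dec i hi (by rw [h]; simp [DlddNode.children])
      if a x then D.evalAt a ⟨hi, hhi.trans i.isLt⟩
      else D.evalAt a ⟨lo, hlo.trans i.isLt⟩
  | .not c =>
      have hc : c < i.1 := D.dec i c (by rw [h]; simp [DlddNode.children])
      ! D.evalAt a ⟨c, hc.trans i.isLt⟩
  | .and c1 c2 =>
      have h1 : c1 < i.1 := D.dec i c1 (by rw [h]; simp [DlddNode.children])
      have h2 : c2 < i.1 := D.dec i c2 (by rw [h]; simp [DlddNode.children])
      D.evalAt a ⟨c1, h1.trans i.isLt⟩ && D.evalAt a ⟨c2, h2.trans i.isLt⟩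
  | .or c1 c2 =>
      have h1 : c1 < i.1 := D.dec i c1 (by rw [h]; simp [DlddNode.children])
      have h2 : c2 < i.1 := D.dec i c2 (by rw [h]; simp [DlddNode.children])
      D.evalAt a ⟨c1, h1.trans i.isLt⟩ || D.evalAt a ⟨c2, h2.trans i.isLt⟩
  | .xor c1 c2 =>
      have h1 : c1 < i.1 := D.dec i c1 (by rw [h]; simp [DlddNode.children])
      have h2 : c2 < i.1 := D.dec i c2 (by rw [h]; simp [DlddNode.children])
      Bool.xor (D.evalAt a ⟨c1, h1.trans i.isLt⟩) (D.evalAt a ⟨c2, h2.trans i.isLt⟩)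
  | .equiv c1 c2 =>
      have h1 : c1 < i.1 := D.dec i c1 (by rw [h]; simp [DlddNode.children])
      have h2 : c2 < i.1 := D.dec i c2 (by rw [h]; simp [DlddNode.children])
      D.evalAt a ⟨c1, h1.trans i.isLt⟩ == D.evalAt a ⟨c2, h2.trans i.isLt⟩
termination_by i.1
decreasing_by
  · exact hhi
  · exact hlo
  · exact hc
  · exact h1
  · exact h2
  · exact h1
  · exact h2
  · exact h1
  · exact h2
  · exact h1
  · exact h2

/-- The Boolean value computed by the DLDD. -/
def eval (D : DLDD V) (a : V → Bool) : Bool := D.evalAt a D.root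

/-- Edge relation of the underlying DAG. -/
def edge (D : DLDD V) (i j : Fin D.size) : Prop := j.1 ∈ (D.node i).children

/-- Reachability in the underlying DAG. -/
def reach (D : DLDD V) : Fin D.size → Fin D.size → Prop :=
  Relation.ReflTransGen D.edge

/-- Node `i` is a decision node testing the variable `x`. -/
def tests (D : DLDD V) (i : Fin D.size) (x : V) : Prop :=
  ∃ lo hi, D.node i = .decision x lo hi

/-- Along every path from the root, each variable is tested at most once. -/
def ReadOnce (D : DLDD V) : Prop :=
  ∀ i c j x, D.reach D.root i → D.tests i x → D.edge i c → D.reach c j →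
    ¬ D.tests j x

/-- The variable `x` is mentioned in the sub-DAG rooted at `i`. -/
def mentions (D : DLDD V) (i : Fin D.size) (x : V) : Prop :=
  ∃ j, D.reach i j ∧ D.tests j x

/-- Decomposability: the two children's sub-DAGs of any (reachable) binary gate node
mention no common variable. -/
def Decomposable (D : DLDD V) : Prop :=
  ∀ (i : Fin D.size) (c1 c2 : ℕ), D.reach D.root i →
    (D.node i).gateChildren = some (c1, c2) →
    ∀ (h1 : c1 < D.size) (h2 : c2 < D.size) (x : V),
      ¬ (D.mentions ⟨c1, h1⟩ x ∧ D.mentions ⟨c2, h2⟩ x)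

/-- The DLDD computes the Boolean function `Φ`. -/
def Computes (D : DLDD V) (Φ : (V → Bool) → Bool) : Prop :=
  ∀ a, D.eval a = Φ a

end DLDD

/-! ### The queries `h_{kℓ}` and their lineages `H_{kℓ}` -/

/-- The Boolean variables `R(i)`, `S_ℓ(i,j)` (for `1 ≤ ℓ ≤ k`, encoded by `Fin k`),
and `T(j)`, for `i, j ∈ [n]`. -/
inductive HVar (n k : ℕ) where
  | R (i : Fin n)
  | S (l : Fin k) (i j : Fin n)
  | T (j : Fin n)
deriving DecidableEq

/-- The first variable of the prime implicant `P_{ℓ,i,j}`: `R(i)` if `ℓ = 0`,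
otherwise `S_ℓ(i,j)`. -/
def leftVar (n k : ℕ) (l : Fin (k+1)) (i j : Fin n) : HVar n k :=
  if h : l.1 = 0 then .R i else .S ⟨l.1 - 1, by have := l.isLt; omega⟩ i j

/-- The second variable of the prime implicant `P_{ℓ,i,j}`: `T(j)` if `ℓ = k`,
otherwise `S_{ℓ+1}(i,j)`. -/
def rightVar (n k : ℕ) (l : Fin (k+1)) (i j : Fin n) : HVar n k :=
  if h : l.1 = k then .T j else .S ⟨l.1, by have := l.isLt; omega⟩ i j

/-- The conjunction `P_{ℓ,i,j}` as a Boolean function. -/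
def Pfun (n k : ℕ) (l : Fin (k+1)) (i j : Fin n) : (HVar n k → Bool) → Bool :=
  fun a => a (leftVar n k l i j) && a (rightVar n k l i j)

/-- The conjunction `P_{ℓ,i,j}` as a term (partial assignment). -/
def Pterm (n k : ℕ) (l : Fin (k+1)) (i j : Fin n) : HVar n k → Option Bool :=
  fun v => if v = leftVar n k l i j ∨ v = rightVar n k l i j then some true else none

/-- The lineage `H_{kℓ} = ⋁_{i,j∈[n]} P_{ℓ,i,j}`. -/
def Hfun (n k : ℕ) (l : Fin (k+1)) : (HVar n k → Bool) → Bool :=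
  fun a => decide (∃ i j : Fin n, Pfun n k l i j a = true)

/-- The lineage `H_k = H_{k0} ∨ H_{k1} ∨ ⋯ ∨ H_{kk}`. -/
def HkFun (n k : ℕ) : (HVar n k → Bool) → Bool :=
  fun a => decide (∃ l : Fin (k+1), Hfun n k l a = true)

/-- The lineages `B_0 = ⋁_i R(i)`, `B_ℓ = ⋁_{i,j} S_ℓ(i,j)` for `1 ≤ ℓ ≤ k`, and
`B_{k+1} = ⋁_j T(j)`. -/
def Bfun (n k : ℕ) (l : Fin (k+2)) : (HVar n k → Bool) → Bool :=
  fun a => decide (∃ i j : Fin n,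
    (if _ : l.1 = 0 then a (.R i)
     else if _ : l.1 = k + 1 then a (.T j)
     else a (.S ⟨l.1 - 1, by have := l.isLt; omega⟩ i j)) = true)

/-- A Boolean function `f` on `m` variables depends on its `l`-th variable: some
assignment `μ` to the remaining variables restricts `f` to `X_l` or `¬X_l`. -/
def BoolFunDependsOn {m : ℕ} (f : (Fin m → Bool) → Bool) (l : Fin m) : Prop :=
  ∃ μ : Fin m → Bool,
    (∀ b, f (Function.update μ l b) = b) ∨ (∀ b, f (Function.update μ l b) = !b)

/-- The lineage `Ψ = f(H_{k0}, …, H_{kk})`. -/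
def Psi (n k : ℕ) (f : (Fin (k+1) → Bool) → Bool) : (HVar n k → Bool) → Bool :=
  fun a => f (fun l => Hfun n k l a)

/-- `(i,j)` is a transversal of the partial assignment `θ`: for every `0 ≤ ℓ ≤ k`,
`P_{ℓ,i,j}` is a prime implicant of `H_{kℓ}[θ]`. -/
def Transversal (n k : ℕ) (θ : HVar n k → Option Bool) (p : Fin n × Fin n) : Prop :=
  ∀ l : Fin (k+1), BF.IsPrimeImplicant (Pterm n k l p.1 p.2) (BF.restrict (Hfun n k l) θ)

/-- Two pairs of indices are independent: they differ in both coordinates. -/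
def IndepPairs {n : ℕ} (p q : Fin n × Fin n) : Prop := p.1 ≠ q.1 ∧ p.2 ≠ q.2

/-- `θ` has (at least) `m` pairwise independent transversals. -/
def HasIndepTransversals (n k : ℕ) (θ : HVar n k → Option Bool) (m : ℕ) : Prop :=
  ∃ S : Finset (Fin n × Fin n), m ≤ S.card ∧ (∀ p ∈ S, Transversal n k θ p) ∧
    (S : Set (Fin n × Fin n)).Pairwise IndepPairs

/-- The maximum number of pairwise independent transversals of `θ`. -/
noncomputable def maxIndepTransversals (n k : ℕ) (θ : HVar n k → Option Bool) : ℕ :=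
  sSup { m | ∃ S : Finset (Fin n × Fin n), S.card = m ∧ (∀ p ∈ S, Transversal n k θ p) ∧
    (S : Set (Fin n × Fin n)).Pairwise IndepPairs }

/-- A restriction `Φ` of `Ψ = f(H_{k0},…,H_{kk})` is transversal-free: some `θ` with
`Ψ[θ] = Φ` has no transversals. -/
def TransversalFree (n k : ℕ) (f : (Fin (k+1) → Bool) → Bool)
    (Φ : (HVar n k → Bool) → Bool) : Prop :=
  ∃ θ : HVar n k → Option Bool, BF.restrict (Psi n k f) θ = Φ ∧
    ∀ p : Fin n × Fin n, ¬ Transversal n k θ p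

/-- `Z` is an `H_k`-unit of the restriction `Φ` of `Ψ`: `Φ[Z=1]` is transversal-free
but `Φ` is not. -/
def IsHkUnit (n k : ℕ) (f : (Fin (k+1) → Bool) → Bool) (Z : HVar n k)
    (Φ : (HVar n k → Bool) → Bool) : Prop :=
  TransversalFree n k f (BF.restrict Φ (BF.single Z true)) ∧ ¬ TransversalFree n k f Φ

/-- A restriction `Φ` of `Ψ` is transparent: the residual lineages `H_{kℓ}[θ]` are
the same for every `θ` with `Ψ[θ] = Φ`. -/
def Transparent (n k : ℕ) (f : (Fin (k+1) → Bool) → Bool)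
    (Φ : (HVar n k → Bool) → Bool) : Prop :=
  ∃ φ : Fin (k+1) → ((HVar n k → Bool) → Bool),
    ∀ θ : HVar n k → Option Bool, BF.restrict (Psi n k f) θ = Φ →
      ∀ l, BF.restrict (Hfun n k l) θ = φ l

/-- The Boolean variables of the query `h_0`. -/
inductive H0Var (n : ℕ) where
  | R (i : Fin n)
  | S (i j : Fin n)
  | T (j : Fin n)
deriving DecidableEq

/-- The lineage `H_0 = ⋁_{i,j∈[n]} R(i) ∧ S(i,j) ∧ T(j)`. -/
def H0Fun (n : ℕ) : (H0Var n → Bool) → Bool :=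
  fun a => decide (∃ i j : Fin n, (a (.R i) && a (.S i j) && a (.T j)) = true)
namespace HkAux

open BF

lemma restrict_restrict {V : Type} (Φ : (V → Bool) → Bool) (θ τ : V → Option Bool) :
    BF.restrict (BF.restrict Φ θ) τ = BF.restrict Φ (BF.combine θ τ) := by
  funext a
  simp only [BF.restrict, BF.combine]
  congr 1
  funext v
  cases h : θ v <;> simp [h, Option.elim]

lemma TI_mono {V : Type} {τ τ' : V → Option Bool} {Φ : (V → Bool) → Bool}
    (h : BF.Subterm τ' τ) (ht : BF.TermImplies τ' Φ) : BF.TermImplies τ Φ :=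
  fun a ha => ht a (fun v b hv => ha v b (h v b hv))

variable {n k : ℕ}

def BothTrue (σ : HVar n k → Option Bool) (l : Fin (k+1)) : Prop :=
  ∃ i j : Fin n, σ (leftVar n k l i j) = some true ∧ σ (rightVar n k l i j) = some true

def NoC (σ : HVar n k → Option Bool) : Prop := ∀ l, ¬ BothTrue σ l

def H0x (σ : HVar n k → Option Bool) (i : Fin n) : Prop :=
  ∃ j' : Fin n, ∃ h : 0 < k, σ (HVar.S ⟨0, h⟩ i j') = some true

def Hkx (σ : HVar n k → Option Bool) (j : Fin n) : Prop :=
  ∃ i' : Fin n, ∃ h : k - 1 < k, σ (HVar.S ⟨k-1, h⟩ i' j) = some true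

def FreeP (σ : HVar n k → Option Bool) (p : Fin n × Fin n) : Prop :=
  σ (HVar.R p.1) = none ∧ (∀ m : Fin k, σ (HVar.S m p.1 p.2) = none) ∧ σ (HVar.T p.2) = none

def OkV (σ τ : HVar n k → Option Bool) (v : HVar n k) : Prop :=
  σ v = some true ∨ (σ v = none ∧ τ v = some true)

lemma leftVar_zero {i j : Fin n} {l : Fin (k+1)} (h : l.1 = 0) :
    leftVar n k l i j = HVar.R i := by simp [leftVar, h]

lemma leftVar_pos {i j : Fin n} {l : Fin (k+1)} (h : l.1 ≠ 0) :
    leftVar n k l i j = HVar.S ⟨l.1 - 1, by have := l.isLt; omega⟩ i j := by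
  simp [leftVar, h]

lemma rightVar_last {i j : Fin n} {l : Fin (k+1)} (h : l.1 = k) :
    rightVar n k l i j = HVar.T j := by simp [rightVar, h]

lemma rightVar_lt {i j : Fin n} {l : Fin (k+1)} (h : l.1 ≠ k) :
    rightVar n k l i j = HVar.S ⟨l.1, by have := l.isLt; omega⟩ i j := by
  simp [rightVar, h]

lemma LR_ne (l : Fin (k+1)) (i j i' j' : Fin n) :
    leftVar n k l i j ≠ rightVar n k l i' j' := by
  by_cases h0 : l.1 = 0
  · rw [leftVar_zero h0]
    by_cases hkk : l.1 = k
    · rw [rightVar_last hkk]; simp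
    · rw [rightVar_lt hkk]; simp
  · rw [leftVar_pos h0]
    by_cases hkk : l.1 = k
    · rw [rightVar_last hkk]; simp
    · rw [rightVar_lt hkk]
      simp only [ne_eq, HVar.S.injEq, not_and]
      intro hm
      have := congrArg Fin.val hm
      simp only [] at this
      omega

lemma okv_of_getD {σ τ : HVar n k → Option Bool} {v : HVar n k}
    (h : (σ v).getD (decide (τ v = some true)) = true) : OkV σ τ v := by
  cases hs : σ v with
  | none => rw [hs] at h; simp only [Option.getD_none, decide_eq_true_eq] at h
            exact Or.inr ⟨hs, h⟩
  | some b => rw [hs] at h; simp only [Option.getD_some] at h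
              exact Or.inl (by rw [hs, h])

lemma getD_of_okv {σ τ : HVar n k → Option Bool} {a : HVar n k → Bool}
    (ha : ∀ v b, τ v = some b → a v = b) {v : HVar n k} (h : OkV σ τ v) :
    (σ v).getD (a v) = true := by
  rcases h with h | ⟨h1, h2⟩
  · rw [h]; rfl
  · rw [h1]; simpa using ha v true h2

lemma TI_iff {σ τ : HVar n k → Option Bool} (hτ : ∀ v b, τ v = some b → b = true)
    (l : Fin (k+1)) :
    BF.TermImplies τ (BF.restrict (Hfun n k l) σ) ↔
      ∃ i j : Fin n, OkV σ τ (leftVar n k l i j) ∧ OkV σ τ (rightVar n k l i j) := by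
  constructor
  · intro h
    have hresp : ∀ v b, τ v = some b → (fun v => decide (τ v = some true)) v = b := by
      intro v b hv
      have hb := hτ v b hv
      subst hb
      simp [hv]
    have h2 := h _ hresp
    have h2' := of_decide_eq_true (show decide _ = true from h2)
    obtain ⟨i, j, hij⟩ := h2'
    simp only [Pfun] at hij
    rw [Bool.and_eq_true] at hij
    exact ⟨i, j, okv_of_getD hij.1, okv_of_getD hij.2⟩
  · rintro ⟨i, j, hL, hR⟩ a ha
    show decide _ = true
    apply decide_eq_true
    exact ⟨i, j, by simp only [Pfun]; rw [Bool.and_eq_true]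
                    exact ⟨getD_of_okv ha hL, getD_of_okv ha hR⟩⟩

lemma okv_none {σ : HVar n k → Option Bool} {v : HVar n k} :
    OkV σ (fun _ => none) v ↔ σ v = some true := by simp [OkV]

lemma single_hτ {Z : HVar n k} : ∀ v b, BF.single Z true v = some b → b = true := by
  intro v b h
  by_cases hv : v = Z <;> simp [BF.single, hv] at h
  exact h

lemma single_self {Z : HVar n k} : BF.single Z true Z = some true := by simp [BF.single]

lemma single_eq_some {Z v : HVar n k} {b : Bool} (h : BF.single Z true v = some b) :
    v = Z ∧ b = true := by
  by_cases hv : v = Z <;> simp [BF.single, hv] at h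
  exact ⟨hv, h⟩

lemma okv_single {σ : HVar n k → Option Bool} {Z v : HVar n k} :
    OkV σ (BF.single Z true) v ↔ σ v = some true ∨ (σ v = none ∧ v = Z) := by
  unfold OkV
  by_cases h : v = Z <;> simp [BF.single, h]

lemma bothTrue_iff_TI {σ : HVar n k → Option Bool} (l : Fin (k+1)) :
    BothTrue σ l ↔ BF.TermImplies (fun _ => none) (BF.restrict (Hfun n k l) σ) := by
  rw [TI_iff (by intro v b h; cases h) l]
  unfold BothTrue
  simp only [okv_none]

lemma subterm_single {V : Type} [DecidableEq V] {τ' : V → Option Bool} {Z : V}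
    (hsub : BF.Subterm τ' (BF.single Z true)) :
    τ' = BF.single Z true ∨ τ' = fun _ => none := by
  by_cases hZ : τ' Z = some true
  · left; funext w
    by_cases hw : w = Z
    · subst hw; rw [hZ]; simp [BF.single]
    · cases hv : τ' w with
      | none => simp [BF.single, hw]
      | some b => have := hsub w b hv; simp [BF.single, hw] at this
  · right; funext w
    cases hv : τ' w with
    | none => rfl
    | some b =>
      have h1 := hsub w b hv
      by_cases hw : w = Z
      · subst hw
        simp [BF.single] at h1
        rw [h1] at hv
        exact absurd hv hZ
      · simp [BF.single, hw] at h1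

lemma isUnit_iff (σ : HVar n k → Option Bool) (Z : HVar n k) (l : Fin (k+1)) :
    BF.IsUnit Z (BF.restrict (Hfun n k l) σ) ↔
      (∃ i j : Fin n, OkV σ (BF.single Z true) (leftVar n k l i j) ∧
        OkV σ (BF.single Z true) (rightVar n k l i j)) ∧ ¬ BothTrue σ l := by
  unfold BF.IsUnit BF.IsPrimeImplicant
  constructor
  · rintro ⟨h1, h2⟩
    refine ⟨(TI_iff single_hτ l).1 h1, ?_⟩
    intro hbt
    refine h2 (fun _ => none) (by intro v b h; cases h) ?_ ((bothTrue_iff_TI l).1 hbt)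
    intro h
    have := congrFun h Z
    simp [BF.single] at this
  · rintro ⟨hex, hnbt⟩
    refine ⟨(TI_iff single_hτ l).2 hex, ?_⟩
    intro τ' hsub hne hTI
    rcases subterm_single hsub with h | h
    · exact hne h
    · rw [h] at hTI
      exact hnbt ((bothTrue_iff_TI l).2 hTI)

lemma pterm_eq_some {l : Fin (k+1)} {i j : Fin n} {v : HVar n k} {b : Bool}
    (h : Pterm n k l i j v = some b) :
    (v = leftVar n k l i j ∨ v = rightVar n k l i j) ∧ b = true := by
  unfold Pterm at h
  split at h
  · next hc => exact ⟨hc, by injection h with h'; exact h'.symm⟩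
  · cases h

lemma pterm_hτ {l : Fin (k+1)} {i j : Fin n} :
    ∀ v b, Pterm n k l i j v = some b → b = true :=
  fun _ _ h => (pterm_eq_some h).2

lemma pterm_left {l : Fin (k+1)} {i j : Fin n} :
    Pterm n k l i j (leftVar n k l i j) = some true := by simp [Pterm]

lemma pterm_right {l : Fin (k+1)} {i j : Fin n} :
    Pterm n k l i j (rightVar n k l i j) = some true := by simp [Pterm]

lemma subterm_pterm {l : Fin (k+1)} {i j : Fin n} {τ' : HVar n k → Option Bool}
    (hsub : BF.Subterm τ' (Pterm n k l i j)) (hne : τ' ≠ Pterm n k l i j) :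
    BF.Subterm τ' (BF.single (leftVar n k l i j) true) ∨
    BF.Subterm τ' (BF.single (rightVar n k l i j) true) := by
  by_cases hL : τ' (leftVar n k l i j) = some true
  · by_cases hR : τ' (rightVar n k l i j) = some true
    · exfalso
      apply hne
      funext w
      cases hv : τ' w with
      | some b =>
        obtain ⟨hor, hb⟩ := pterm_eq_some (hsub w b hv)
        subst hb
        rcases hor with h | h <;> subst h
        · exact pterm_left.symm
        · exact pterm_right.symm
      | none =>
        by_cases hw : w = leftVar n k l i j ∨ w = rightVar n k l i j
        · exfalso
          rcases hw with hw | hw <;> subst hw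
          · rw [hL] at hv; cases hv
          · rw [hR] at hv; cases hv
        · unfold Pterm; rw [if_neg hw]
    · left
      intro v b hv
      have h1 := pterm_eq_some (hsub v b hv)
      obtain ⟨hor, hb⟩ := h1
      subst hb
      rcases hor with h | h
      · rw [h]; exact single_self
      · rw [h] at hv; exact absurd hv hR
  · right
    intro v b hv
    have h1 := pterm_eq_some (hsub v b hv)
    obtain ⟨hor, hb⟩ := h1
    subst hb
    rcases hor with h | h
    · rw [h] at hv; exact absurd hv hL
    · rw [h]; exact single_self

lemma isPI_iff (σ : HVar n k → Option Bool) (l : Fin (k+1)) (i j : Fin n) :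
    BF.IsPrimeImplicant (Pterm n k l i j) (BF.restrict (Hfun n k l) σ) ↔
      BF.TermImplies (Pterm n k l i j) (BF.restrict (Hfun n k l) σ)
      ∧ ¬ BF.TermImplies (BF.single (leftVar n k l i j) true) (BF.restrict (Hfun n k l) σ)
      ∧ ¬ BF.TermImplies (BF.single (rightVar n k l i j) true) (BF.restrict (Hfun n k l) σ) := by
  constructor
  · rintro ⟨h1, h2⟩
    refine ⟨h1, ?_, ?_⟩
    · refine h2 _ ?_ ?_
      · intro v b hv
        obtain ⟨hvL, hb⟩ := single_eq_some hv
        subst hvL; subst hb; exact pterm_left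
      · intro h
        have := congrFun h (rightVar n k l i j)
        rw [pterm_right] at this
        unfold BF.single at this
        rw [if_neg (Ne.symm (LR_ne l i j i j))] at this
        cases this
    · refine h2 _ ?_ ?_
      · intro v b hv
        obtain ⟨hvR, hb⟩ := single_eq_some hv
        subst hvR; subst hb; exact pterm_right
      · intro h
        have := congrFun h (leftVar n k l i j)
        rw [pterm_left] at this
        unfold BF.single at this
        rw [if_neg (LR_ne l i j i j)] at this
        cases this
  · rintro ⟨h1, hL, hR⟩
    refine ⟨h1, ?_⟩
    intro τ' hsub hne hTI
    rcases subterm_pterm hsub hne with h | h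
    · exact hL (TI_mono h hTI)
    · exact hR (TI_mono h hTI)

end HkAux
namespace HkAux

open BF

variable {n k : ℕ}

lemma leftVar_mk0 {h : (0:ℕ) < k+1} (i j : Fin n) :
    leftVar n k ⟨0,h⟩ i j = HVar.R i := leftVar_zero rfl

lemma rightVar_mk0 (hk1 : 1 ≤ k) {h : (0:ℕ) < k+1} (i j : Fin n) :
    rightVar n k ⟨0,h⟩ i j = HVar.S ⟨0, by omega⟩ i j := by
  rw [rightVar_lt (by simp; omega)]

lemma leftVar_mkk (hk1 : 1 ≤ k) {h : k < k+1} (i j : Fin n) :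
    leftVar n k ⟨k,h⟩ i j = HVar.S ⟨k-1, by omega⟩ i j := by
  rw [leftVar_pos (by simp; omega)]

lemma rightVar_mkk {h : k < k+1} (i j : Fin n) :
    rightVar n k ⟨k,h⟩ i j = HVar.T j := rightVar_last rfl

lemma leftVar_S (m : Fin k) (i j : Fin n) :
    leftVar n k ⟨m.1+1, by have := m.isLt; omega⟩ i j = HVar.S m i j := by
  rw [leftVar_pos (by simp)]
  exact congrArg (fun mm => HVar.S mm i j) (Fin.ext (by simp))

lemma rightVar_S (m : Fin k) (i j : Fin n) :
    rightVar n k ⟨m.1, by have := m.isLt; omega⟩ i j = HVar.S m i j := by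
  rw [rightVar_lt (by have := m.isLt; simp; omega)]

lemma freeP_LR {σ : HVar n k → Option Bool} {p : Fin n × Fin n} (h : FreeP σ p)
    (l : Fin (k+1)) :
    σ (leftVar n k l p.1 p.2) = none ∧ σ (rightVar n k l p.1 p.2) = none := by
  obtain ⟨h1, h2, h3⟩ := h
  constructor
  · by_cases h0 : l.1 = 0
    · rw [leftVar_zero h0]; exact h1
    · rw [leftVar_pos h0]; exact h2 _
  · by_cases hkk : l.1 = k
    · rw [rightVar_last hkk]; exact h3
    · rw [rightVar_lt hkk]; exact h2 _

lemma okv_pterm_to_single_right {σ : HVar n k → Option Bool} {l : Fin (k+1)}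
    {i j : Fin n} {v : HVar n k} {b : Bool}
    (hs : σ (leftVar n k l i j) = some b)
    (h : OkV σ (Pterm n k l i j) v) : OkV σ (BF.single (rightVar n k l i j) true) v := by
  rcases h with h | ⟨h1, h2⟩
  · exact Or.inl h
  · obtain ⟨hor, -⟩ := pterm_eq_some h2
    rcases hor with hv | hv
    · subst hv; rw [hs] at h1; cases h1
    · subst hv; exact Or.inr ⟨h1, single_self⟩

lemma okv_pterm_to_single_left {σ : HVar n k → Option Bool} {l : Fin (k+1)}
    {i j : Fin n} {v : HVar n k} {b : Bool}
    (hs : σ (rightVar n k l i j) = some b)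
    (h : OkV σ (Pterm n k l i j) v) : OkV σ (BF.single (leftVar n k l i j) true) v := by
  rcases h with h | ⟨h1, h2⟩
  · exact Or.inl h
  · obtain ⟨hor, -⟩ := pterm_eq_some h2
    rcases hor with hv | hv
    · subst hv; exact Or.inr ⟨h1, single_self⟩
    · subst hv; rw [hs] at h1; cases h1

lemma tchar (hk1 : 1 ≤ k) (σ : HVar n k → Option Bool) (p : Fin n × Fin n) :
    Transversal n k σ p ↔ NoC σ ∧ FreeP σ p ∧ ¬ H0x σ p.1 ∧ ¬ Hkx σ p.2 := by
  constructor
  · intro h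
    have hc : ∀ l : Fin (k+1),
        BF.TermImplies (Pterm n k l p.1 p.2) (BF.restrict (Hfun n k l) σ)
        ∧ ¬ BF.TermImplies (BF.single (leftVar n k l p.1 p.2) true) (BF.restrict (Hfun n k l) σ)
        ∧ ¬ BF.TermImplies (BF.single (rightVar n k l p.1 p.2) true) (BF.restrict (Hfun n k l) σ) := by
      intro l
      have := (isPI_iff σ l p.1 p.2).1 (h l)
      exact ⟨this.1, this.2.1, this.2.2⟩
    have hnoc : NoC σ := by
      intro l hbt
      apply (hc l).2.1
      exact TI_mono (by intro v b hv; cases hv) ((bothTrue_iff_TI l).1 hbt)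
    have hfree2 : ∀ l : Fin (k+1),
        σ (leftVar n k l p.1 p.2) = none ∧ σ (rightVar n k l p.1 p.2) = none := by
      intro l
      constructor
      · cases hs : σ (leftVar n k l p.1 p.2) with
        | none => rfl
        | some b =>
          exfalso
          apply (hc l).2.2
          rw [TI_iff single_hτ]
          obtain ⟨i', j', hL', hR'⟩ := (TI_iff pterm_hτ l).1 (hc l).1
          exact ⟨i', j', okv_pterm_to_single_right hs hL', okv_pterm_to_single_right hs hR'⟩
      · cases hs : σ (rightVar n k l p.1 p.2) with
        | none => rfl
        | some b =>
          exfalso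
          apply (hc l).2.1
          rw [TI_iff single_hτ]
          obtain ⟨i', j', hL', hR'⟩ := (TI_iff pterm_hτ l).1 (hc l).1
          exact ⟨i', j', okv_pterm_to_single_left hs hL', okv_pterm_to_single_left hs hR'⟩
    have hfp : FreeP σ p := by
      refine ⟨?_, ?_, ?_⟩
      · have h2 := (hfree2 ⟨0, by omega⟩).1
        rwa [leftVar_mk0] at h2
      · intro m
        have h2 := (hfree2 ⟨m.1+1, by have := m.isLt; omega⟩).1
        rwa [leftVar_S] at h2
      · have h2 := (hfree2 ⟨k, by omega⟩).2
        rwa [rightVar_mkk] at h2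
    refine ⟨hnoc, hfp, ?_, ?_⟩
    · rintro ⟨j', hpos, hs⟩
      apply (hc ⟨0, by omega⟩).2.1
      rw [TI_iff single_hτ]
      refine ⟨p.1, j', ?_, ?_⟩
      · simp only [leftVar_mk0]
        exact Or.inr ⟨hfp.1, single_self⟩
      · simp only [rightVar_mk0 hk1, leftVar_mk0]
        exact Or.inl hs
    · rintro ⟨i', hpos, hs⟩
      apply (hc ⟨k, by omega⟩).2.2
      rw [TI_iff single_hτ]
      refine ⟨i', p.2, ?_, ?_⟩
      · simp only [leftVar_mkk hk1, rightVar_mkk]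
        exact Or.inl hs
      · simp only [rightVar_mkk]
        exact Or.inr ⟨hfp.2.2, single_self⟩
  · rintro ⟨hnoc, hfree, hx0, hxk⟩ l
    rw [isPI_iff]
    refine ⟨?_, ?_, ?_⟩
    · rw [TI_iff pterm_hτ]
      exact ⟨p.1, p.2, Or.inr ⟨(freeP_LR hfree l).1, pterm_left⟩,
        Or.inr ⟨(freeP_LR hfree l).2, pterm_right⟩⟩
    · intro hTI
      obtain ⟨i', j', hL', hR'⟩ := (TI_iff single_hτ _).1 hTI
      rw [okv_single] at hL' hR'
      rcases hR' with hR' | ⟨-, hRe⟩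
      · rcases hL' with hL' | ⟨-, hLe⟩
        · exact hnoc l ⟨i', j', hL', hR'⟩
        · by_cases h0 : l.1 = 0
          · obtain ⟨lv, hlv⟩ := l
            have h0' : lv = 0 := h0
            subst h0'
            simp only [leftVar_mk0, HVar.R.injEq] at hLe
            rw [rightVar_mk0 hk1] at hR'
            subst hLe
            exact hx0 ⟨j', by omega, hR'⟩
          · rw [leftVar_pos h0, leftVar_pos h0] at hLe
            simp only [HVar.S.injEq] at hLe
            obtain ⟨-, hi, hj⟩ := hLe
            subst hi; subst hj
            rw [(freeP_LR hfree l).2] at hR'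
            cases hR'
      · exact (LR_ne l p.1 p.2 i' j') hRe.symm
    · intro hTI
      obtain ⟨i', j', hL', hR'⟩ := (TI_iff single_hτ _).1 hTI
      rw [okv_single] at hL' hR'
      rcases hL' with hL' | ⟨-, hLe⟩
      · rcases hR' with hR' | ⟨-, hRe⟩
        · exact hnoc l ⟨i', j', hL', hR'⟩
        · by_cases hkk : l.1 = k
          · obtain ⟨lv, hlv⟩ := l
            have hk' : lv = k := hkk
            subst hk'
            simp only [rightVar_mkk, HVar.T.injEq] at hRe
            rw [leftVar_mkk hk1] at hL'
            subst hRe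
            exact hxk ⟨i', by omega, hL'⟩
          · rw [rightVar_lt hkk, rightVar_lt hkk] at hRe
            simp only [HVar.S.injEq] at hRe
            obtain ⟨-, hi, hj⟩ := hRe
            subst hi; subst hj
            rw [(freeP_LR hfree l).1] at hL'
            cases hL'
      · exact (LR_ne l i' j' p.1 p.2) hLe

end HkAux
namespace HkAux

open BF

variable {n k : ℕ}

def cvar (p : Fin n × Fin n) (m : ℕ) : HVar n k :=
  if _ : m = 0 then HVar.R p.1
  else if hs : m - 1 < k then HVar.S ⟨m-1, hs⟩ p.1 p.2
  else HVar.T p.2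

lemma cvar_zero (p : Fin n × Fin n) : (cvar p 0 : HVar n k) = HVar.R p.1 := by
  simp [cvar]

lemma cvar_succ (p : Fin n × Fin n) (m : Fin k) :
    (cvar p (m.1+1) : HVar n k) = HVar.S m p.1 p.2 := by
  have h1 : m.1 + 1 ≠ 0 := by omega
  have h2 : m.1 + 1 - 1 < k := by have := m.isLt; omega
  simp only [cvar, h1, dif_neg, h2, dif_pos, reduceDIte]
  exact congrArg (fun mm => HVar.S mm p.1 p.2) (Fin.ext (by simp))

lemma cvar_last (p : Fin n × Fin n) : (cvar p (k+1) : HVar n k) = HVar.T p.2 := by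
  have h1 : k + 1 ≠ 0 := by omega
  have h2 : ¬ (k + 1 - 1 < k) := by omega
  simp [cvar, h1, h2]

def onChain (p : Fin n × Fin n) (x : ℕ → Bool) : HVar n k → Bool
  | HVar.R i => decide (i = p.1) && x 0
  | HVar.S m i j => decide (i = p.1 ∧ j = p.2) && x (m.1+1)
  | HVar.T j => decide (j = p.2) && x (k+1)

def mkA (cs : List ((Fin n × Fin n) × (ℕ → Bool))) : HVar n k → Bool :=
  fun v => cs.any fun px => onChain px.1 px.2 v

lemma mkA_iff {cs : List ((Fin n × Fin n) × (ℕ → Bool))} {v : HVar n k} :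
    mkA cs v = true ↔ ∃ px ∈ cs, onChain px.1 px.2 v = true := by
  simp [mkA, List.any_eq_true]

lemma onChain_left {p : Fin n × Fin n} {x : ℕ → Bool} {l : Fin (k+1)} {i j : Fin n} :
    onChain p x (leftVar n k l i j) = true ↔
      (l.1 = 0 ∧ i = p.1 ∧ x 0 = true) ∨ (l.1 ≠ 0 ∧ i = p.1 ∧ j = p.2 ∧ x l.1 = true) := by
  by_cases h0 : l.1 = 0
  · rw [leftVar_zero h0]
    simp [onChain, h0]
  · rw [leftVar_pos h0]
    have hval : l.1 - 1 + 1 = l.1 := by omega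
    simp [onChain, hval, h0]
    tauto

lemma onChain_right {p : Fin n × Fin n} {x : ℕ → Bool} {l : Fin (k+1)} {i j : Fin n} :
    onChain p x (rightVar n k l i j) = true ↔
      (l.1 = k ∧ j = p.2 ∧ x (k+1) = true) ∨ (l.1 ≠ k ∧ i = p.1 ∧ j = p.2 ∧ x (l.1+1) = true) := by
  by_cases hkk : l.1 = k
  · rw [rightVar_last hkk]
    simp [onChain, hkk]
  · rw [rightVar_lt hkk]
    simp [onChain, hkk]
    tauto

lemma onChain_congr {p : Fin n × Fin n} {x x' : ℕ → Bool} {v : HVar n k}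
    (h : ∀ m', m' ≤ k+1 → v = cvar p m' → x m' = x' m') :
    onChain p x v = onChain p x' v := by
  cases v with
  | R i =>
    by_cases hi : i = p.1
    · subst hi
      have := h 0 (by omega) (cvar_zero p).symm
      simp [onChain, this]
    · simp [onChain, hi]
  | S m i j =>
    by_cases hij : i = p.1 ∧ j = p.2
    · obtain ⟨hi, hj⟩ := hij
      subst hi; subst hj
      have := h (m.1+1) (by have := m.isLt; omega) (cvar_succ p m).symm
      simp [onChain, this]
    · simp [onChain, hij]
  | T j =>
    by_cases hj : j = p.2
    · subst hj
      have := h (k+1) (by omega) (cvar_last p).symm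
      simp [onChain, this]
    · simp [onChain, hj]

lemma ov_true {σ : HVar n k → Option Bool} {a : HVar n k → Bool} {v : HVar n k} :
    (σ v).getD (a v) = true ↔ σ v = some true ∨ (σ v = none ∧ a v = true) := by
  cases hs : σ v <;> simp [hs]

lemma restrict_Hfun_iff {σ : HVar n k → Option Bool} {a : HVar n k → Bool} {l : Fin (k+1)} :
    BF.restrict (Hfun n k l) σ a = true ↔
      ∃ i j : Fin n, (σ (leftVar n k l i j)).getD (a (leftVar n k l i j)) = true
        ∧ (σ (rightVar n k l i j)).getD (a (rightVar n k l i j)) = true := by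
  simp only [BF.restrict, Hfun, Pfun, decide_eq_true_eq, Bool.and_eq_true]

lemma evalgen (hk1 : 1 ≤ k) (σ : HVar n k → Option Bool)
    (cs : List ((Fin n × Fin n) × (ℕ → Bool)))
    (hfree : ∀ px ∈ cs, FreeP σ px.1)
    (hpw : ∀ px ∈ cs, ∀ qx ∈ cs, px ≠ qx → px.1.1 ≠ qx.1.1 ∧ px.1.2 ≠ qx.1.2)
    (l : Fin (k+1)) :
    BF.restrict (Hfun n k l) σ (mkA cs) = true ↔
      (BothTrue σ l
      ∨ (l.1 = 0 ∧ ∃ px ∈ cs, px.2 0 = true ∧ H0x σ px.1.1)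
      ∨ (l.1 = k ∧ ∃ px ∈ cs, px.2 (k+1) = true ∧ Hkx σ px.1.2)
      ∨ (∃ px ∈ cs, px.2 l.1 = true ∧ px.2 (l.1+1) = true)) := by
  rw [restrict_Hfun_iff]
  constructor
  · rintro ⟨i, j, hL, hR⟩
    rw [ov_true] at hL hR
    rcases hL with hL | ⟨hLn, hLc⟩
    · rcases hR with hR | ⟨hRn, hRc⟩
      · exact Or.inl ⟨i, j, hL, hR⟩
      · rw [mkA_iff] at hRc
        obtain ⟨qx, hqx, honc⟩ := hRc
        rw [onChain_right] at honc
        rcases honc with ⟨hlk, hj, hx⟩ | ⟨hlk, hi, hj, hx⟩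
        · refine Or.inr (Or.inr (Or.inl ⟨hlk, qx, hqx, hx, ?_⟩))
          subst hj
          obtain ⟨lv, hlv⟩ := l
          have hlv' : lv = k := hlk
          subst hlv'
          rw [leftVar_mkk hk1] at hL
          exact ⟨i, by omega, hL⟩
        · exfalso
          subst hi; subst hj
          rw [(freeP_LR (hfree qx hqx) l).1] at hL
          cases hL
    · rw [mkA_iff] at hLc
      obtain ⟨px, hpx, honc⟩ := hLc
      rw [onChain_left] at honc
      rcases hR with hR | ⟨hRn, hRc⟩
      · rcases honc with ⟨hl0, hi, hx⟩ | ⟨hl0, hi, hj, hx⟩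
        · refine Or.inr (Or.inl ⟨hl0, px, hpx, hx, ?_⟩)
          subst hi
          obtain ⟨lv, hlv⟩ := l
          have hlv' : lv = 0 := hl0
          subst hlv'
          rw [rightVar_mk0 hk1] at hR
          exact ⟨j, by omega, hR⟩
        · exfalso
          subst hi; subst hj
          rw [(freeP_LR (hfree px hpx) l).2] at hR
          cases hR
      · rw [mkA_iff] at hRc
        obtain ⟨qx, hqx, honc2⟩ := hRc
        rw [onChain_right] at honc2
        rcases honc with ⟨hl0, hi, hx0⟩ | ⟨hl0, hi, hj, hxl⟩
        · rcases honc2 with ⟨hlk, hj2, hxk⟩ | ⟨hlk, hi2, hj2, hxr⟩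
          · omega
          · have hpq : px = qx := by
              by_contra hne
              exact (hpw px hpx qx hqx hne).1 (hi.symm.trans hi2)
            subst hpq
            refine Or.inr (Or.inr (Or.inr ⟨px, hpx, ?_, hxr⟩))
            rw [hl0]; exact hx0
        · rcases honc2 with ⟨hlk, hj2, hxk⟩ | ⟨hlk, hi2, hj2, hxr⟩
          · have hpq : px = qx := by
              by_contra hne
              exact (hpw px hpx qx hqx hne).2 (hj.symm.trans hj2)
            subst hpq
            refine Or.inr (Or.inr (Or.inr ⟨px, hpx, hxl, ?_⟩))
            rw [hlk]; exact hxk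
          · have hpq : px = qx := by
              by_contra hne
              exact (hpw px hpx qx hqx hne).1 (hi.symm.trans hi2)
            subst hpq
            exact Or.inr (Or.inr (Or.inr ⟨px, hpx, hxl, hxr⟩))
  · rintro (⟨i, j, h1, h2⟩ | ⟨hl0, px, hpx, hx, j', hpos, hs⟩ |
      ⟨hlk, px, hpx, hx, i', hpos, hs⟩ | ⟨px, hpx, hx1, hx2⟩)
    · exact ⟨i, j, by rw [ov_true]; exact Or.inl h1, by rw [ov_true]; exact Or.inl h2⟩
    · obtain ⟨lv, hlv⟩ := l
      have hlv' : lv = 0 := hl0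
      subst hlv'
      refine ⟨px.1.1, j', ?_, ?_⟩
      · rw [ov_true]
        refine Or.inr ⟨?_, ?_⟩
        · rw [leftVar_mk0]; exact (hfree px hpx).1
        · rw [mkA_iff]
          refine ⟨px, hpx, ?_⟩
          rw [leftVar_mk0]
          simp [onChain, hx]
      · rw [ov_true]
        rw [rightVar_mk0 hk1]
        exact Or.inl hs
    · obtain ⟨lv, hlv⟩ := l
      have hlv' : lv = k := hlk
      subst hlv'
      refine ⟨i', px.1.2, ?_, ?_⟩
      · rw [ov_true]
        rw [leftVar_mkk hk1]
        exact Or.inl hs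
      · rw [ov_true]
        refine Or.inr ⟨?_, ?_⟩
        · rw [rightVar_mkk]; exact (hfree px hpx).2.2
        · rw [mkA_iff]
          refine ⟨px, hpx, ?_⟩
          rw [rightVar_mkk]
          simp [onChain, hx]
    · refine ⟨px.1.1, px.1.2, ?_, ?_⟩
      · rw [ov_true]
        refine Or.inr ⟨(freeP_LR (hfree px hpx) l).1, ?_⟩
        rw [mkA_iff]
        refine ⟨px, hpx, ?_⟩
        rw [onChain_left]
        by_cases h0 : l.1 = 0
        · exact Or.inl ⟨h0, rfl, by rw [← h0]; exact hx1⟩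
        · exact Or.inr ⟨h0, rfl, rfl, hx1⟩
      · rw [ov_true]
        refine Or.inr ⟨(freeP_LR (hfree px hpx) l).2, ?_⟩
        rw [mkA_iff]
        refine ⟨px, hpx, ?_⟩
        rw [onChain_right]
        by_cases hkk : l.1 = k
        · exact Or.inl ⟨hkk, rfl, by rw [← hkk]; exact hx2⟩
        · exact Or.inr ⟨hkk, rfl, rfl, hx2⟩

end HkAux
namespace HkAux

open BF

variable {n k : ℕ}

def nsB (cb : ℕ → Bool) (l : ℕ) : ℕ :=
  ((Finset.range (l+1)).filter (fun m => cb m = true ∧ (m = 0 ∨ cb (m-1) = false))).card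

lemma nsB_succ (cb : ℕ → Bool) (l : ℕ) :
    nsB cb (l+1) = nsB cb l + (if cb (l+1) = true ∧ cb l = false then 1 else 0) := by
  unfold nsB
  rw [Finset.range_add_one, Finset.filter_insert]
  by_cases h : cb (l+1) = true ∧ cb l = false
  · rw [if_pos ⟨h.1, Or.inr h.2⟩, Finset.card_insert_of_notMem (by simp), if_pos h]
  · rw [if_neg ?_, if_neg h, add_zero]
    rintro ⟨h1, h2 | h2⟩
    · omega
    · exact h ⟨h1, h2⟩

def chX (cb : ℕ → Bool) (m : ℕ) : Bool :=
  (cb m && decide (nsB cb m % 2 = 0)) || (decide (1 ≤ m) && cb (m-1) && decide (nsB cb (m-1) % 2 = 0))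

def chY (cb : ℕ → Bool) (m : ℕ) : Bool :=
  (cb m && decide (nsB cb m % 2 = 1)) || (decide (1 ≤ m) && cb (m-1) && decide (nsB cb (m-1) % 2 = 1))

lemma P2main (cb : ℕ → Bool) (l : ℕ) :
    ((chX cb l && chX cb (l+1)) || (chY cb l && chY cb (l+1))) = cb l := by
  cases hcl : cb l with
  | true =>
    by_cases he : nsB cb l % 2 = 0
    · have hx1 : chX cb l = true := by simp [chX, hcl, he]
      have hx2 : chX cb (l+1) = true := by
        simp [chX, Nat.add_sub_cancel, hcl, he, Nat.le_add_left]
      rw [hx1, hx2]; simp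
    · have ho : nsB cb l % 2 = 1 := by omega
      have hy1 : chY cb l = true := by simp [chY, hcl, ho]
      have hy2 : chY cb (l+1) = true := by
        simp [chY, Nat.add_sub_cancel, hcl, ho, Nat.le_add_left]
      rw [hy1, hy2]; simp
  | false =>
    have e1 : cb (l+1) = true → nsB cb (l+1) = nsB cb l + 1 := by
      intro h; rw [nsB_succ, if_pos ⟨h, hcl⟩]
    have e2 : 1 ≤ l → nsB cb l = nsB cb (l-1) := by
      intro hl
      have hll : l = (l-1)+1 := by omega
      conv_lhs => rw [hll]
      rw [nsB_succ, if_neg (by rw [← hll]; intro hc; rw [hcl] at hc; exact absurd hc.1 (by simp))]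
      omega
    have hX : (chX cb l && chX cb (l+1)) = false := by
      cases hx : chX cb l with
      | false => simp
      | true =>
        cases hx2 : chX cb (l+1) with
        | false => simp
        | true =>
          exfalso
          simp only [chX, hcl, Bool.false_and, Bool.false_or, Bool.and_eq_true,
            decide_eq_true_eq] at hx
          obtain ⟨⟨hl1, hcl1⟩, hev1⟩ := hx
          simp only [chX, Nat.add_sub_cancel, hcl, Bool.and_false, Bool.false_and,
            Bool.or_false, Bool.and_eq_true, decide_eq_true_eq] at hx2
          obtain ⟨hc2, hev2⟩ := hx2
          have he1 := e1 hc2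
          have he2 := e2 hl1
          omega
    have hY : (chY cb l && chY cb (l+1)) = false := by
      cases hy : chY cb l with
      | false => simp
      | true =>
        cases hy2 : chY cb (l+1) with
        | false => simp
        | true =>
          exfalso
          simp only [chY, hcl, Bool.false_and, Bool.false_or, Bool.and_eq_true,
            decide_eq_true_eq] at hy
          obtain ⟨⟨hl1, hcl1⟩, hev1⟩ := hy
          simp only [chY, Nat.add_sub_cancel, hcl, Bool.and_false, Bool.false_and,
            Bool.or_false, Bool.and_eq_true, decide_eq_true_eq] at hy2
          obtain ⟨hc2, hev2⟩ := hy2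
          have he1 := e1 hc2
          have he2 := e2 hl1
          omega
    rw [hX, hY]
    rfl

def PatCond (cs : List ((Fin n × Fin n) × (ℕ → Bool))) (c : Fin (k+1) → Bool) : Prop :=
  (∀ l : Fin (k+1), (∃ px ∈ cs, px.2 l.1 = true ∧ px.2 (l.1+1) = true) ↔ c l = true)
  ∧ (∀ px ∈ cs, px.2 0 = true → c ⟨0, by omega⟩ = true)
  ∧ (∀ px ∈ cs, px.2 (k+1) = true → c ⟨k, by omega⟩ = true)

def PatList (L : List (Fin n × Fin n)) : Prop :=
  ∀ c : Fin (k+1) → Bool, ∃ cs, cs.map Prod.fst = L ∧ PatCond cs c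

lemma patList_pair (a b : Fin n × Fin n) : PatList (n := n) (k := k) [a, b] := by
  intro c
  set cb : ℕ → Bool := fun m => if h : m < k+1 then c ⟨m, h⟩ else false with hcb
  have hcbl : ∀ l : Fin (k+1), cb l.1 = c l := by
    intro l
    rw [hcb]
    simp [l.isLt]
  have hcb0 : cb 0 = c ⟨0, by omega⟩ := hcbl ⟨0, by omega⟩
  have hcbk : cb k = c ⟨k, by omega⟩ := hcbl ⟨k, by omega⟩
  have hcbk1 : cb (k+1) = false := by rw [hcb]; simp
  refine ⟨[(a, chX cb), (b, chY cb)], rfl, ?_, ?_, ?_⟩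
  · intro l
    have hp := P2main cb l.1
    rw [hcbl l] at hp
    constructor
    · rintro ⟨px, hpx, h1, h2⟩
      simp only [List.mem_cons, List.mem_singleton, List.not_mem_nil, or_false] at hpx
      rcases hpx with h | h <;> subst h <;> rw [← hp] <;> simp_all
    · intro hc
      rw [← hp] at hc
      rcases Bool.or_eq_true_iff.1 hc with h | h
      · exact ⟨(a, chX cb), by simp, Bool.and_eq_true_iff.1 h⟩
      · exact ⟨(b, chY cb), by simp, Bool.and_eq_true_iff.1 h⟩
  · intro px hpx hx0
    simp only [List.mem_cons, List.mem_singleton, List.not_mem_nil, or_false] at hpx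
    rw [← hcb0]
    rcases hpx with h | h <;> subst h <;> simp only [chX, chY] at hx0 <;>
      simp only [Nat.lt_irrefl, decide_eq_true_eq, Bool.and_eq_true, Bool.or_eq_true] at hx0 <;>
      rcases hx0 with ⟨h1, -⟩ | ⟨⟨h1, -⟩, -⟩ <;> first | exact h1 | omega
  · intro px hpx hxk
    simp only [List.mem_cons, List.mem_singleton, List.not_mem_nil, or_false] at hpx
    rw [← hcbk]
    rcases hpx with h | h <;> subst h <;>
      simp only [chX, chY, hcbk1, Bool.false_and, Bool.false_or, Nat.add_sub_cancel,
        Bool.and_eq_true, decide_eq_true_eq] at hxk <;>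
      exact hxk.1.2

lemma patList_single (hk1 : k = 1) (a : Fin n × Fin n) : PatList (n := n) (k := k) [a] := by
  subst hk1
  intro c
  set x : ℕ → Bool := fun m => (c 0 && decide (m ≤ 1)) || (c 1 && decide (1 ≤ m)) with hx
  have hx0 : x 0 = c 0 := by rw [hx]; simp
  have hx1 : x 1 = (c 0 || c 1) := by rw [hx]; simp
  have hx2 : x 2 = c 1 := by rw [hx]; simp
  refine ⟨[(a, x)], rfl, ?_, ?_, ?_⟩
  · intro l
    obtain ⟨lv, hlv⟩ := l
    interval_cases lv
    · simp only [List.mem_singleton, List.mem_cons, List.not_mem_nil, or_false]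
      constructor
      · rintro ⟨px, hpx, h1, h2⟩
        subst hpx
        have h1' : x 0 = true := h1
        rw [hx0] at h1'
        exact h1'
      · intro hc
        refine ⟨(a, x), rfl, ?_, ?_⟩
        · show x 0 = true
          rw [hx0]; exact hc
        · show x 1 = true
          rw [hx1, show c 0 = true from hc]; simp
    · simp only [List.mem_singleton, List.mem_cons, List.not_mem_nil, or_false]
      constructor
      · rintro ⟨px, hpx, h1, h2⟩
        subst hpx
        have h2' : x 2 = true := h2
        rw [hx2] at h2'
        exact h2'
      · intro hc
        refine ⟨(a, x), rfl, ?_, ?_⟩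
        · show x 1 = true
          rw [hx1, show c 1 = true from hc]; simp
        · show x 2 = true
          rw [hx2]; exact hc
  · intro px hpx h
    simp only [List.mem_singleton, List.mem_cons, List.not_mem_nil, or_false] at hpx
    subst hpx
    have h' : x 0 = true := h
    rw [hx0] at h'
    exact h'
  · intro px hpx h
    simp only [List.mem_singleton, List.mem_cons, List.not_mem_nil, or_false] at hpx
    subst hpx
    have h' : x 2 = true := h
    rw [hx2] at h'
    exact h'

end HkAux
namespace HkAux

open BF

variable {n k : ℕ}

lemma bool_ext {a b : Bool} (h : (a = true) ↔ (b = true)) : a = b := by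
  cases a <;> cases b <;> simp_all

lemma dep_ne {m : ℕ} {f : (Fin m → Bool) → Bool} {l0 : Fin m} (h : BoolFunDependsOn f l0) :
    ∃ μ, f (Function.update μ l0 true) ≠ f (Function.update μ l0 false) := by
  obtain ⟨μ, h | h⟩ := h
  · exact ⟨μ, by rw [h true, h false]; simp⟩
  · exact ⟨μ, by rw [h true, h false]; simp⟩

lemma restrict_psi (f : (Fin (k+1) → Bool) → Bool) (σ : HVar n k → Option Bool)
    (a : HVar n k → Bool) :
    BF.restrict (Psi n k f) σ a = f (fun l => BF.restrict (Hfun n k l) σ a) := rfl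

lemma indep_symm {p q : Fin n × Fin n} (h : IndepPairs p q) : IndepPairs q p :=
  ⟨h.1.symm, h.2.symm⟩

lemma pw_entries {cs : List ((Fin n × Fin n) × (ℕ → Bool))} {L : List (Fin n × Fin n)}
    (hmap : cs.map Prod.fst = L) (hLpw : L.Pairwise IndepPairs) :
    cs.Pairwise (fun px qx => IndepPairs px.1 qx.1) := by
  rw [← hmap] at hLpw
  exact List.pairwise_map.1 hLpw

lemma pw_append_one {cs : List ((Fin n × Fin n) × (ℕ → Bool))} {t : Fin n × Fin n}
    {x : ℕ → Bool} (h1 : cs.Pairwise (fun px qx => IndepPairs px.1 qx.1))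
    (h2 : ∀ px ∈ cs, IndepPairs px.1 t) :
    (cs ++ [(t,x)]).Pairwise (fun px qx => IndepPairs px.1 qx.1) := by
  rw [List.pairwise_append]
  refine ⟨h1, List.pairwise_singleton _ _, ?_⟩
  intro a ha b hb
  rw [List.mem_singleton] at hb
  subst hb
  exact h2 a ha

lemma pw_to_forall {cs : List ((Fin n × Fin n) × (ℕ → Bool))}
    (h : cs.Pairwise (fun px qx => IndepPairs px.1 qx.1)) :
    ∀ px ∈ cs, ∀ qx ∈ cs, px ≠ qx → px.1.1 ≠ qx.1.1 ∧ px.1.2 ≠ qx.1.2 := by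
  intro px hpx qx hqx hne
  haveI : Std.Symm (fun px qx : (Fin n × Fin n) × (ℕ → Bool) => IndepPairs px.1 qx.1) :=
    ⟨fun a b hab => indep_symm hab⟩
  exact h.forall hpx hqx hne

lemma mkA_append_single {cs : List ((Fin n × Fin n) × (ℕ → Bool))} {t : Fin n × Fin n}
    {x : ℕ → Bool} {v : HVar n k} :
    mkA (cs ++ [(t,x)]) v = (mkA cs v || onChain t x v) := by
  simp [mkA, List.any_append]

lemma evaltheta (hk1 : 1 ≤ k) (σ : HVar n k → Option Bool)
    (FL : List ((Fin n × Fin n) × (ℕ → Bool)))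
    (htr : ∀ px ∈ FL, Transversal n k σ px.1) (hNoC : NoC σ)
    (hpw : ∀ px ∈ FL, ∀ qx ∈ FL, px ≠ qx → px.1.1 ≠ qx.1.1 ∧ px.1.2 ≠ qx.1.2)
    (c : Fin (k+1) → Bool)
    (hc : ∀ l : Fin (k+1), (∃ px ∈ FL, px.2 l.1 = true ∧ px.2 (l.1+1) = true) ↔ c l = true) :
    ∀ l, BF.restrict (Hfun n k l) σ (mkA FL) = c l := by
  intro l
  have hfree : ∀ px ∈ FL, FreeP σ px.1 := fun px h => ((tchar hk1 σ px.1).1 (htr px h)).2.1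
  apply bool_ext
  rw [evalgen hk1 σ FL hfree hpw l, ← hc l]
  constructor
  · rintro (hbt | ⟨hl0, px, hpx, hx, hH⟩ | ⟨hlk, px, hpx, hx, hH⟩ | hp)
    · exact absurd hbt (hNoC l)
    · exact absurd hH ((tchar hk1 σ px.1).1 (htr px hpx)).2.2.1
    · exact absurd hH ((tchar hk1 σ px.1).1 (htr px hpx)).2.2.2
    · exact hp
  · intro hp
    exact Or.inr (Or.inr (Or.inr hp))

lemma free_step (hk1 : 1 ≤ k) (f : (Fin (k+1) → Bool) → Bool) (hf : ∀ l, BoolFunDependsOn f l)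
    (σ σ'' : HVar n k → Option Bool)
    (heq : BF.restrict (Psi n k f) σ'' = BF.restrict (Psi n k f) σ)
    (t : Fin n × Fin n) (htt : Transversal n k σ t)
    (L : List (Fin n × Fin n)) (hpatL : PatList (n := n) (k := k) L)
    (hLtr : ∀ p ∈ L, Transversal n k σ p)
    (hLpw : L.Pairwise IndepPairs)
    (htL : ∀ p ∈ L, IndepPairs t p)
    (m : ℕ) (hm : m ≤ k+1) :
    σ'' (cvar t m) = none := by
  by_contra hW
  obtain ⟨b, hb⟩ : ∃ b, σ'' (cvar t m : HVar n k) = some b := by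
    cases h : σ'' (cvar t m : HVar n k) with
    | none => exact absurd h hW
    | some b => exact ⟨b, rfl⟩
  have hNoC : NoC σ := ((tchar hk1 σ t).1 htt).1
  set ℓ : ℕ := min m k with hℓdef
  have hℓk : ℓ ≤ k := min_le_right m k
  set ℓF : Fin (k+1) := ⟨ℓ, by omega⟩ with hℓF
  obtain ⟨μ, hμ⟩ := dep_ne (hf ℓF)
  obtain ⟨cs, hcsmap, hcs1, hcs2, hcs3⟩ := hpatL (Function.update μ ℓF false)
  set dfun : ℕ → Bool := fun m' => decide (m' = ℓ ∨ m' = ℓ+1) with hd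
  set efun : ℕ → Bool := fun m' => (dfun m' && !(decide (m' = m))) with he
  have hmem : ∀ px ∈ cs, px.1 ∈ L := by
    intro px h
    rw [← hcsmap]
    exact List.mem_map_of_mem h
  have hpwcs := pw_entries hcsmap hLpw
  have hindcs : ∀ px ∈ cs, IndepPairs px.1 t := fun px h => indep_symm (htL _ (hmem px h))
  have hpwF : ∀ x : ℕ → Bool, ∀ px ∈ cs ++ [(t, x)], ∀ qx ∈ cs ++ [(t,x)],
      px ≠ qx → px.1.1 ≠ qx.1.1 ∧ px.1.2 ≠ qx.1.2 :=
    fun x => pw_to_forall (pw_append_one hpwcs hindcs)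
  have htrF : ∀ x : ℕ → Bool, ∀ px ∈ cs ++ [(t,x)], Transversal n k σ px.1 := by
    intro x px hpx
    rcases List.mem_append.1 hpx with h | h
    · exact hLtr _ (hmem px h)
    · rw [List.mem_singleton] at h; subst h; exact htt
  have hA0 : ∀ l, BF.restrict (Hfun n k l) σ (mkA (cs ++ [(t, efun)])) =
      Function.update μ ℓF false l := by
    apply evaltheta hk1 σ _ (htrF efun) hNoC (hpwF efun)
    intro l
    rw [← hcs1 l]
    constructor
    · rintro ⟨px, hpx, h1, h2⟩
      rcases List.mem_append.1 hpx with h | h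
      · exact ⟨px, h, h1, h2⟩
      · exfalso
        rw [List.mem_singleton] at h; subst h
        rw [he] at h1 h2
        simp only [hd, Bool.and_eq_true, decide_eq_true_eq, Bool.not_eq_true',
          decide_eq_false_iff_not] at h1 h2
        omega
    · rintro ⟨px, hpx, h1, h2⟩
      exact ⟨px, List.mem_append_left _ hpx, h1, h2⟩
  have hA1 : ∀ l, BF.restrict (Hfun n k l) σ (mkA (cs ++ [(t, dfun)])) =
      Function.update μ ℓF true l := by
    apply evaltheta hk1 σ _ (htrF dfun) hNoC (hpwF dfun)
    intro l
    constructor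
    · rintro ⟨px, hpx, h1, h2⟩
      rcases List.mem_append.1 hpx with h | h
      · have hcl := (hcs1 l).1 ⟨px, h, h1, h2⟩
        by_cases hll : l = ℓF
        · subst hll
          rw [Function.update_self] at hcl
          cases hcl
        · rw [Function.update_of_ne hll] at hcl ⊢
          exact hcl
      · rw [List.mem_singleton] at h; subst h
        simp only [hd, decide_eq_true_eq] at h1 h2
        have hlℓ : l.1 = ℓ := by omega
        have hll : l = ℓF := Fin.ext hlℓ
        subst hll
        rw [Function.update_self]
    · intro hcl
      by_cases hll : l = ℓF
      · subst hll
        refine ⟨(t, dfun), List.mem_append_right _ (List.mem_singleton_self _), ?_, ?_⟩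
        · simp [hd, hℓF]
        · simp [hd, hℓF]
      · rw [Function.update_of_ne hll] at hcl
        have hcl' : Function.update μ ℓF false l = true := by
          rw [Function.update_of_ne hll]; exact hcl
        obtain ⟨px, hpx, h1, h2⟩ := (hcs1 l).2 hcl'
        exact ⟨px, List.mem_append_left _ hpx, h1, h2⟩
  have hagree : ∀ v : HVar n k, v ≠ cvar t m →
      mkA (cs ++ [(t, efun)]) v = mkA (cs ++ [(t, dfun)]) v := by
    intro v hv
    rw [mkA_append_single, mkA_append_single]
    congr 1
    apply onChain_congr
    intro m' hm' hveq
    by_cases hmm : m' = m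
    · subst hmm; exact absurd hveq hv
    · rw [he]; simp [hmm]
  have hov : (fun v => (σ'' v).getD (mkA (cs ++ [(t, efun)]) v)) =
      (fun v => (σ'' v).getD (mkA (cs ++ [(t, dfun)]) v)) := by
    funext v
    by_cases hv : v = cvar t m
    · subst hv; rw [hb]; rfl
    · rw [hagree v hv]
  apply hμ
  calc f (Function.update μ ℓF true)
      = BF.restrict (Psi n k f) σ (mkA (cs ++ [(t, dfun)])) := by
        rw [restrict_psi]; congr 1; funext l; rw [hA1 l]
    _ = BF.restrict (Psi n k f) σ'' (mkA (cs ++ [(t, dfun)])) := (congrFun heq _).symm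
    _ = BF.restrict (Psi n k f) σ'' (mkA (cs ++ [(t, efun)])) := by
        simp only [BF.restrict]; rw [hov]
    _ = BF.restrict (Psi n k f) σ (mkA (cs ++ [(t, efun)])) := congrFun heq _
    _ = f (Function.update μ ℓF false) := by
        rw [restrict_psi]; congr 1; funext l; rw [hA0 l]

end HkAux
namespace HkAux

open BF

variable {n k : ℕ}

lemma caseA (hk1 : 1 ≤ k) (f : (Fin (k+1) → Bool) → Bool) (hf : ∀ l, BoolFunDependsOn f l)
    (σ σ'' : HVar n k → Option Bool)
    (heq : BF.restrict (Psi n k f) σ'' = BF.restrict (Psi n k f) σ)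
    (hNoC : NoC σ)
    (l0 : Fin (k+1)) (hC : BothTrue σ'' l0)
    (L : List (Fin n × Fin n)) (hpatL : PatList (n := n) (k := k) L)
    (hLtr : ∀ p ∈ L, Transversal n k σ p) (hLpw : L.Pairwise IndepPairs)
    (hfree'' : ∀ p ∈ L, FreeP σ'' p) : False := by
  classical
  obtain ⟨μ, hμ⟩ := dep_ne (hf l0)
  have key : ∀ c : Fin (k+1) → Bool,
      f (fun l => (c l || decide (BothTrue σ'' l))) = f c := by
    intro c
    obtain ⟨cs, hmap, h1, h2, h3⟩ := hpatL c
    have hmem : ∀ px ∈ cs, px.1 ∈ L := by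
      intro px h; rw [← hmap]; exact List.mem_map_of_mem h
    have hpw' := pw_to_forall (pw_entries hmap hLpw)
    have hAσ : ∀ l, BF.restrict (Hfun n k l) σ (mkA cs) = c l :=
      evaltheta hk1 σ cs (fun px h => hLtr _ (hmem px h)) hNoC hpw' c h1
    have hA'' : ∀ l, BF.restrict (Hfun n k l) σ'' (mkA cs) =
        (c l || decide (BothTrue σ'' l)) := by
      intro l
      apply bool_ext
      rw [evalgen hk1 σ'' cs (fun px h => hfree'' _ (hmem px h)) hpw' l, Bool.or_eq_true]
      constructor
      · rintro (hbt | ⟨hl0, px, hpx, hx, hH⟩ | ⟨hlk, px, hpx, hx, hH⟩ | hp)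
        · exact Or.inr (decide_eq_true hbt)
        · refine Or.inl ?_
          have hcl : c ⟨0, by omega⟩ = true := h2 px hpx hx
          have hle : l = ⟨0, by omega⟩ := Fin.ext hl0
          rw [hle]; exact hcl
        · refine Or.inl ?_
          have hcl : c ⟨k, by omega⟩ = true := h3 px hpx hx
          have hle : l = ⟨k, by omega⟩ := Fin.ext hlk
          rw [hle]; exact hcl
        · exact Or.inl ((h1 l).1 hp)
      · rintro (hcl | hbt)
        · exact Or.inr (Or.inr (Or.inr ((h1 l).2 hcl)))
        · exact Or.inl (of_decide_eq_true hbt)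
    calc f (fun l => (c l || decide (BothTrue σ'' l)))
        = BF.restrict (Psi n k f) σ'' (mkA cs) := by
          rw [restrict_psi]; congr 1; funext l; rw [hA'' l]
      _ = BF.restrict (Psi n k f) σ (mkA cs) := congrFun heq _
      _ = f c := by rw [restrict_psi]; congr 1; funext l; rw [hAσ l]
  apply hμ
  have e1 := key (Function.update μ l0 true)
  have e2 := key (Function.update μ l0 false)
  rw [← e1, ← e2]
  congr 1
  funext l
  by_cases hl : l = l0
  · subst hl
    rw [Function.update_self, Function.update_self, decide_eq_true hC]
    simp
  · rw [Function.update_of_ne hl, Function.update_of_ne hl]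

lemma caseB0 (hk1 : 1 ≤ k) (f : (Fin (k+1) → Bool) → Bool) (hf : ∀ l, BoolFunDependsOn f l)
    (σ σ'' : HVar n k → Option Bool)
    (heq : BF.restrict (Psi n k f) σ'' = BF.restrict (Psi n k f) σ)
    (hNoC : NoC σ) (hNoC'' : NoC σ'')
    (p : Fin n × Fin n) (hptr : Transversal n k σ p) (hH0 : H0x σ'' p.1)
    (L : List (Fin n × Fin n)) (hpatL : PatList (n := n) (k := k) L)
    (hLtr : ∀ q ∈ L, Transversal n k σ q) (hLpw : L.Pairwise IndepPairs)
    (hpL : ∀ q ∈ L, IndepPairs p q)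
    (hfree''p : FreeP σ'' p) (hfree''L : ∀ q ∈ L, FreeP σ'' q) : False := by
  have h0k : (0:ℕ) < k+1 := by omega
  set l0 : Fin (k+1) := ⟨0, h0k⟩ with hl0def
  obtain ⟨μ, hμ⟩ := dep_ne (hf l0)
  obtain ⟨cs, hmap, h1, h2, h3⟩ := hpatL (Function.update μ l0 false)
  set e0 : ℕ → Bool := fun m' => decide (m' = 0) with he0
  have hmem : ∀ px ∈ cs, px.1 ∈ L := by
    intro px h; rw [← hmap]; exact List.mem_map_of_mem h
  have hpw' := pw_to_forall (pw_append_one (x := e0) (pw_entries hmap hLpw)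
    (fun px h => indep_symm (hpL _ (hmem px h))))
  have htrF : ∀ px ∈ cs ++ [(p, e0)], Transversal n k σ px.1 := by
    intro px hpx
    rcases List.mem_append.1 hpx with h | h
    · exact hLtr _ (hmem px h)
    · rw [List.mem_singleton] at h; subst h; exact hptr
  have hfree''F : ∀ px ∈ cs ++ [(p, e0)], FreeP σ'' px.1 := by
    intro px hpx
    rcases List.mem_append.1 hpx with h | h
    · exact hfree''L _ (hmem px h)
    · rw [List.mem_singleton] at h; subst h; exact hfree''p
  have hpair : ∀ l : Fin (k+1),
      (∃ px ∈ cs ++ [(p, e0)], px.2 l.1 = true ∧ px.2 (l.1+1) = true)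
      ↔ Function.update μ l0 false l = true := by
    intro l
    rw [← h1 l]
    constructor
    · rintro ⟨px, hpx, hx1, hx2⟩
      rcases List.mem_append.1 hpx with h | h
      · exact ⟨px, h, hx1, hx2⟩
      · exfalso
        rw [List.mem_singleton] at h; subst h
        rw [he0] at hx2
        simp only [decide_eq_true_eq] at hx2
        omega
    · rintro ⟨px, hpx, hx1, hx2⟩
      exact ⟨px, List.mem_append_left _ hpx, hx1, hx2⟩
  have hAσ := evaltheta hk1 σ _ htrF hNoC hpw' _ hpair
  have hA'' : ∀ l, BF.restrict (Hfun n k l) σ'' (mkA (cs ++ [(p, e0)])) =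
      Function.update μ l0 true l := by
    intro l
    apply bool_ext
    rw [evalgen hk1 σ'' _ hfree''F hpw' l]
    constructor
    · rintro (hbt | ⟨hl0', px, hpx, hx, hH⟩ | ⟨hlk, px, hpx, hx, hH⟩ | hp)
      · exact absurd hbt (hNoC'' l)
      · have hle : l = l0 := Fin.ext hl0'
        rw [hle, Function.update_self]
      · rcases List.mem_append.1 hpx with h | h
        · have hck := h3 px h hx
          have hne : (⟨k, by omega⟩ : Fin (k+1)) ≠ l0 := by
            intro hk'
            have := congrArg Fin.val hk'
            simp only [hl0def] at this
            omega
          rw [Function.update_of_ne hne] at hck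
          have hlk' : l = ⟨k, by omega⟩ := Fin.ext hlk
          rw [hlk', Function.update_of_ne hne]
          exact hck
        · rw [List.mem_singleton] at h; subst h
          rw [he0] at hx
          simp only [decide_eq_true_eq] at hx
          omega
      · obtain ⟨px, hpx, hx1, hx2⟩ := hp
        rcases List.mem_append.1 hpx with h | h
        · have hcl := (h1 l).1 ⟨px, h, hx1, hx2⟩
          by_cases hll : l = l0
          · subst hll
            rw [Function.update_self] at hcl
            cases hcl
          · rw [Function.update_of_ne hll] at hcl
            rw [Function.update_of_ne hll]
            exact hcl
        · rw [List.mem_singleton] at h; subst h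
          rw [he0] at hx2
          simp only [decide_eq_true_eq] at hx2
          omega
    · intro hupd
      by_cases hll : l = l0
      · subst hll
        refine Or.inr (Or.inl ⟨rfl, (p, e0),
          List.mem_append_right _ (List.mem_singleton_self _), ?_, hH0⟩)
        rw [he0]; simp
      · rw [Function.update_of_ne hll] at hupd
        have hcl : Function.update μ l0 false l = true := by
          rw [Function.update_of_ne hll]; exact hupd
        exact Or.inr (Or.inr (Or.inr ((hpair l).2 hcl)))
  apply hμ
  calc f (Function.update μ l0 true)
      = BF.restrict (Psi n k f) σ'' (mkA (cs ++ [(p, e0)])) := by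
        rw [restrict_psi]; congr 1; funext l; rw [hA'' l]
    _ = BF.restrict (Psi n k f) σ (mkA (cs ++ [(p, e0)])) := congrFun heq _
    _ = f (Function.update μ l0 false) := by
        rw [restrict_psi]; congr 1; funext l; rw [hAσ l]

lemma caseBk (hk1 : 1 ≤ k) (f : (Fin (k+1) → Bool) → Bool) (hf : ∀ l, BoolFunDependsOn f l)
    (σ σ'' : HVar n k → Option Bool)
    (heq : BF.restrict (Psi n k f) σ'' = BF.restrict (Psi n k f) σ)
    (hNoC : NoC σ) (hNoC'' : NoC σ'')
    (p : Fin n × Fin n) (hptr : Transversal n k σ p) (hHk : Hkx σ'' p.2)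
    (L : List (Fin n × Fin n)) (hpatL : PatList (n := n) (k := k) L)
    (hLtr : ∀ q ∈ L, Transversal n k σ q) (hLpw : L.Pairwise IndepPairs)
    (hpL : ∀ q ∈ L, IndepPairs p q)
    (hfree''p : FreeP σ'' p) (hfree''L : ∀ q ∈ L, FreeP σ'' q) : False := by
  have hkk : k < k+1 := by omega
  set l0 : Fin (k+1) := ⟨k, hkk⟩ with hl0def
  obtain ⟨μ, hμ⟩ := dep_ne (hf l0)
  obtain ⟨cs, hmap, h1, h2, h3⟩ := hpatL (Function.update μ l0 false)
  set ek : ℕ → Bool := fun m' => decide (m' = k+1) with hek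
  have hmem : ∀ px ∈ cs, px.1 ∈ L := by
    intro px h; rw [← hmap]; exact List.mem_map_of_mem h
  have hpw' := pw_to_forall (pw_append_one (x := ek) (pw_entries hmap hLpw)
    (fun px h => indep_symm (hpL _ (hmem px h))))
  have htrF : ∀ px ∈ cs ++ [(p, ek)], Transversal n k σ px.1 := by
    intro px hpx
    rcases List.mem_append.1 hpx with h | h
    · exact hLtr _ (hmem px h)
    · rw [List.mem_singleton] at h; subst h; exact hptr
  have hfree''F : ∀ px ∈ cs ++ [(p, ek)], FreeP σ'' px.1 := by
    intro px hpx
    rcases List.mem_append.1 hpx with h | h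
    · exact hfree''L _ (hmem px h)
    · rw [List.mem_singleton] at h; subst h; exact hfree''p
  have hpair : ∀ l : Fin (k+1),
      (∃ px ∈ cs ++ [(p, ek)], px.2 l.1 = true ∧ px.2 (l.1+1) = true)
      ↔ Function.update μ l0 false l = true := by
    intro l
    rw [← h1 l]
    constructor
    · rintro ⟨px, hpx, hx1, hx2⟩
      rcases List.mem_append.1 hpx with h | h
      · exact ⟨px, h, hx1, hx2⟩
      · exfalso
        rw [List.mem_singleton] at h; subst h
        rw [hek] at hx1
        simp only [decide_eq_true_eq] at hx1
        have := l.isLt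
        omega
    · rintro ⟨px, hpx, hx1, hx2⟩
      exact ⟨px, List.mem_append_left _ hpx, hx1, hx2⟩
  have hAσ := evaltheta hk1 σ _ htrF hNoC hpw' _ hpair
  have hA'' : ∀ l, BF.restrict (Hfun n k l) σ'' (mkA (cs ++ [(p, ek)])) =
      Function.update μ l0 true l := by
    intro l
    apply bool_ext
    rw [evalgen hk1 σ'' _ hfree''F hpw' l]
    constructor
    · rintro (hbt | ⟨hl0', px, hpx, hx, hH⟩ | ⟨hlk, px, hpx, hx, hH⟩ | hp)
      · exact absurd hbt (hNoC'' l)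
      · rcases List.mem_append.1 hpx with h | h
        · have hck := h2 px h hx
          have hne : (⟨0, by omega⟩ : Fin (k+1)) ≠ l0 := by
            intro hk'
            have := congrArg Fin.val hk'
            simp only [hl0def] at this
            omega
          rw [Function.update_of_ne hne] at hck
          have hlk' : l = ⟨0, by omega⟩ := Fin.ext hl0'
          rw [hlk', Function.update_of_ne hne]
          exact hck
        · rw [List.mem_singleton] at h; subst h
          rw [hek] at hx
          simp only [decide_eq_true_eq] at hx
          omega
      · have hle : l = l0 := Fin.ext hlk
        rw [hle, Function.update_self]
      · obtain ⟨px, hpx, hx1, hx2⟩ := hp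
        rcases List.mem_append.1 hpx with h | h
        · have hcl := (h1 l).1 ⟨px, h, hx1, hx2⟩
          by_cases hll : l = l0
          · subst hll
            rw [Function.update_self] at hcl
            cases hcl
          · rw [Function.update_of_ne hll] at hcl
            rw [Function.update_of_ne hll]
            exact hcl
        · rw [List.mem_singleton] at h; subst h
          rw [hek] at hx1
          simp only [decide_eq_true_eq] at hx1
          have := l.isLt
          omega
    · intro hupd
      by_cases hll : l = l0
      · subst hll
        refine Or.inr (Or.inr (Or.inl ⟨rfl, (p, ek),
          List.mem_append_right _ (List.mem_singleton_self _), ?_, hHk⟩))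
        rw [hek]; simp
      · rw [Function.update_of_ne hll] at hupd
        have hcl : Function.update μ l0 false l = true := by
          rw [Function.update_of_ne hll]; exact hupd
        exact Or.inr (Or.inr (Or.inr ((hpair l).2 hcl)))
  apply hμ
  calc f (Function.update μ l0 true)
      = BF.restrict (Psi n k f) σ'' (mkA (cs ++ [(p, ek)])) := by
        rw [restrict_psi]; congr 1; funext l; rw [hA'' l]
    _ = BF.restrict (Psi n k f) σ (mkA (cs ++ [(p, ek)])) := congrFun heq _
    _ = f (Function.update μ l0 false) := by
        rw [restrict_psi]; congr 1; funext l; rw [hAσ l]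

lemma star_core (hk1 : 1 ≤ k) (f : (Fin (k+1) → Bool) → Bool) (hf : ∀ l, BoolFunDependsOn f l)
    (σ σ'' : HVar n k → Option Bool)
    (heq : BF.restrict (Psi n k f) σ'' = BF.restrict (Psi n k f) σ)
    (hno : ∀ q : Fin n × Fin n, ¬ Transversal n k σ'' q)
    (CH : List (Fin n × Fin n)) (hCHne : CH ≠ [])
    (htr : ∀ q ∈ CH, Transversal n k σ q)
    (hpat : ∀ t ∈ CH, ∃ L, (∀ q ∈ L, q ∈ CH) ∧ (∀ q ∈ L, IndepPairs t q) ∧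
        L.Pairwise IndepPairs ∧ PatList (n := n) (k := k) L) : False := by
  obtain ⟨t0, ht0⟩ := List.exists_mem_of_ne_nil CH hCHne
  have hNoC : NoC σ := ((tchar hk1 σ t0).1 (htr t0 ht0)).1
  have hfree'' : ∀ t ∈ CH, FreeP σ'' t := by
    intro t ht
    obtain ⟨L, hLmem, hLind, hLpw, hLpat⟩ := hpat t ht
    have hstep : ∀ m, m ≤ k+1 → σ'' (cvar t m : HVar n k) = none :=
      fun m hm => free_step hk1 f hf σ σ'' heq t (htr t ht) L hLpat
        (fun q hq => htr q (hLmem q hq)) hLpw hLind m hm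
    refine ⟨?_, ?_, ?_⟩
    · have := hstep 0 (by omega); rwa [cvar_zero] at this
    · intro m
      have := hstep (m.1+1) (by have := m.isLt; omega)
      rwa [cvar_succ] at this
    · have := hstep (k+1) (le_refl _); rwa [cvar_last] at this
  by_cases hC : ∃ l0, BothTrue σ'' l0
  · obtain ⟨l0, hbt⟩ := hC
    obtain ⟨L, hLmem, hLind, hLpw, hLpat⟩ := hpat t0 ht0
    exact caseA hk1 f hf σ σ'' heq hNoC l0 hbt L hLpat
      (fun q hq => htr q (hLmem q hq)) hLpw
      (fun q hq => hfree'' q (hLmem q hq))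
  · have hNoC'' : NoC σ'' := fun l hbt => hC ⟨l, hbt⟩
    obtain ⟨L, hLmem, hLind, hLpw, hLpat⟩ := hpat t0 ht0
    have h1 := hno t0
    rw [tchar hk1 σ'' t0] at h1
    by_cases hH0 : H0x σ'' t0.1
    · exact caseB0 hk1 f hf σ σ'' heq hNoC hNoC'' t0 (htr t0 ht0) hH0 L hLpat
        (fun q hq => htr q (hLmem q hq)) hLpw hLind (hfree'' t0 ht0)
        (fun q hq => hfree'' q (hLmem q hq))
    · by_cases hHk : Hkx σ'' t0.2
      · exact caseBk hk1 f hf σ σ'' heq hNoC hNoC'' t0 (htr t0 ht0) hHk L hLpat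
          (fun q hq => htr q (hLmem q hq)) hLpw hLind (hfree'' t0 ht0)
          (fun q hq => hfree'' q (hLmem q hq))
      · exact h1 ⟨hNoC'', hfree'' t0 ht0, hH0, hHk⟩

lemma star (hk1 : 1 ≤ k) (f : (Fin (k+1) → Bool) → Bool) (hf : ∀ l, BoolFunDependsOn f l)
    (σ : HVar n k → Option Bool) (T : Finset (Fin n × Fin n))
    (htr : ∀ q ∈ T, Transversal n k σ q)
    (hind : (↑T : Set (Fin n × Fin n)).Pairwise IndepPairs)
    (hcard : 3 ≤ T.card ∨ (k = 1 ∧ 2 ≤ T.card)) :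
    ¬ TransversalFree n k f (BF.restrict (Psi n k f) σ) := by
  rintro ⟨σ'', heq, hno⟩
  have hind' : ∀ a ∈ T, ∀ b ∈ T, a ≠ b → IndepPairs a b :=
    fun a ha b hb hab => hind (Finset.mem_coe.2 ha) (Finset.mem_coe.2 hb) hab
  by_cases hk1' : k = 1
  · have h2card : 2 ≤ T.card := by rcases hcard with h | ⟨-, h⟩ <;> omega
    obtain ⟨p, hp, q, hq, hpq⟩ := Finset.one_lt_card.1 (show 1 < T.card by omega)
    have hipq : IndepPairs p q := hind' p hp q hq hpq
    refine star_core hk1 f hf σ σ'' heq hno [p, q] (by simp) ?_ ?_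
    · intro x hx
      simp only [List.mem_cons, List.mem_singleton, List.not_mem_nil, or_false] at hx
      rcases hx with h | h <;> rw [h]
      · exact htr p hp
      · exact htr q hq
    · intro t ht
      simp only [List.mem_cons, List.mem_singleton, List.not_mem_nil, or_false] at ht
      rcases ht with h | h <;> rw [h]
      · refine ⟨[q], ?_, ?_, List.pairwise_singleton _ _, patList_single hk1' q⟩
        · intro x hx; rw [List.mem_singleton] at hx; rw [hx]; simp
        · intro x hx; rw [List.mem_singleton] at hx; rw [hx]; exact hipq
      · refine ⟨[p], ?_, ?_, List.pairwise_singleton _ _, patList_single hk1' p⟩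
        · intro x hx; rw [List.mem_singleton] at hx; rw [hx]; simp
        · intro x hx; rw [List.mem_singleton] at hx; rw [hx]; exact indep_symm hipq
  · have h3card : 3 ≤ T.card := by
      rcases hcard with h | ⟨h, -⟩
      · exact h
      · exact absurd h hk1'
    obtain ⟨p, hp⟩ := Finset.card_pos.1 (show 0 < T.card by omega)
    obtain ⟨q, hq⟩ := Finset.card_pos.1
      (by rw [Finset.card_erase_of_mem hp]; omega : 0 < (T.erase p).card)
    obtain ⟨r, hr⟩ := Finset.card_pos.1
      (by rw [Finset.card_erase_of_mem hq, Finset.card_erase_of_mem hp]; omega :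
        0 < ((T.erase p).erase q).card)
    have hqT : q ∈ T := Finset.mem_of_mem_erase hq
    have hrT : r ∈ T := Finset.mem_of_mem_erase (Finset.mem_of_mem_erase hr)
    have hqp : q ≠ p := Finset.ne_of_mem_erase hq
    have hrq : r ≠ q := Finset.ne_of_mem_erase hr
    have hrp : r ≠ p := Finset.ne_of_mem_erase (Finset.mem_of_mem_erase hr)
    have hipq : IndepPairs p q := hind' p hp q hqT (Ne.symm hqp)
    have hipr : IndepPairs p r := hind' p hp r hrT (Ne.symm hrp)
    have hiqr : IndepPairs q r := hind' q hqT r hrT (Ne.symm hrq)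
    refine star_core hk1 f hf σ σ'' heq hno [p, q, r] (by simp) ?_ ?_
    · intro x hx
      simp only [List.mem_cons, List.mem_singleton, List.not_mem_nil, or_false] at hx
      rcases hx with h | h | h <;> rw [h]
      · exact htr p hp
      · exact htr q hqT
      · exact htr r hrT
    · intro t ht
      simp only [List.mem_cons, List.mem_singleton, List.not_mem_nil, or_false] at ht
      rcases ht with h | h | h <;> rw [h]
      · refine ⟨[q, r], ?_, ?_, ?_, patList_pair q r⟩
        · intro x hx
          simp only [List.mem_cons, List.mem_singleton, List.not_mem_nil, or_false] at hx
          rcases hx with h | h <;> rw [h] <;> simp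
        · intro x hx
          simp only [List.mem_cons, List.mem_singleton, List.not_mem_nil, or_false] at hx
          rcases hx with h | h <;> rw [h]
          · exact hipq
          · exact hipr
        · refine List.Pairwise.cons ?_ (List.pairwise_singleton _ _)
          intro b hb; rw [List.mem_singleton] at hb; subst hb; exact hiqr
      · refine ⟨[p, r], ?_, ?_, ?_, patList_pair p r⟩
        · intro x hx
          simp only [List.mem_cons, List.mem_singleton, List.not_mem_nil, or_false] at hx
          rcases hx with h | h <;> rw [h] <;> simp
        · intro x hx
          simp only [List.mem_cons, List.mem_singleton, List.not_mem_nil, or_false] at hx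
          rcases hx with h | h <;> rw [h]
          · exact indep_symm hipq
          · exact hiqr
        · refine List.Pairwise.cons ?_ (List.pairwise_singleton _ _)
          intro b hb; rw [List.mem_singleton] at hb; subst hb; exact hipr
      · refine ⟨[p, q], ?_, ?_, ?_, patList_pair p q⟩
        · intro x hx
          simp only [List.mem_cons, List.mem_singleton, List.not_mem_nil, or_false] at hx
          rcases hx with h | h <;> rw [h] <;> simp
        · intro x hx
          simp only [List.mem_cons, List.mem_singleton, List.not_mem_nil, or_false] at hx
          rcases hx with h | h <;> rw [h]
          · exact indep_symm hipr
          · exact indep_symm hiqr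
        · refine List.Pairwise.cons ?_ (List.pairwise_singleton _ _)
          intro b hb; rw [List.mem_singleton] at hb; subst hb; exact hipq

end HkAux
namespace HkAux

open BF

variable {n k : ℕ}

lemma combine_none {θ : HVar n k → Option Bool} {Z v : HVar n k} :
    BF.combine θ (BF.single Z true) v = none ↔ θ v = none ∧ v ≠ Z := by
  unfold BF.combine BF.single
  cases h : θ v
  · by_cases hv : v = Z <;> simp [Option.elim, hv]
  · simp [Option.elim]

lemma combine_some_true {θ : HVar n k → Option Bool} {Z v : HVar n k} :
    BF.combine θ (BF.single Z true) v = some true ↔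
      θ v = some true ∨ (θ v = none ∧ v = Z) := by
  unfold BF.combine BF.single
  cases h : θ v
  · by_cases hv : v = Z <;> simp [Option.elim, hv]
  · simp [Option.elim]

lemma cvar_eq_R {p : Fin n × Fin n} {m : ℕ} {i0 : Fin n}
    (h : (cvar p m : HVar n k) = HVar.R i0) : p.1 = i0 := by
  unfold cvar at h
  split at h
  · simp only [HVar.R.injEq] at h; exact h
  · split at h <;> simp at h

lemma cvar_eq_S {p : Fin n × Fin n} {m : ℕ} {mm : Fin k} {i0 j0 : Fin n}
    (h : (cvar p m : HVar n k) = HVar.S mm i0 j0) : p.1 = i0 ∧ p.2 = j0 := by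
  unfold cvar at h
  split at h
  · simp at h
  · split at h
    · simp only [HVar.S.injEq] at h; exact ⟨h.2.1, h.2.2⟩
    · simp at h

lemma cvar_eq_T {p : Fin n × Fin n} {m : ℕ} {j0 : Fin n}
    (h : (cvar p m : HVar n k) = HVar.T j0) : p.2 = j0 := by
  unfold cvar at h
  split at h
  · simp at h
  · split at h
    · simp at h
    · simp only [HVar.T.injEq] at h; exact h

lemma okv_combine {θ : HVar n k → Option Bool} {Z v : HVar n k}
    (h : OkV θ (BF.single Z true) v) :
    BF.combine θ (BF.single Z true) v = some true := by
  rcases h with h | ⟨h1, h2⟩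
  · exact combine_some_true.2 (Or.inl h)
  · exact combine_some_true.2 (Or.inr ⟨h1, (single_eq_some h2).1⟩)

lemma survival (hk1 : 1 ≤ k) (θ : HVar n k → Option Bool) (Z : HVar n k)
    (hZ : θ Z = none)
    (hnu : ∀ l : Fin (k+1), ¬ BF.IsUnit Z (BF.restrict (Hfun n k l) θ))
    (S : Finset (Fin n × Fin n)) (hS4 : 4 ≤ S.card)
    (hStr : ∀ p ∈ S, Transversal n k θ p)
    (hSpw : (↑S : Set (Fin n × Fin n)).Pairwise IndepPairs) :
    ∃ S' : Finset (Fin n × Fin n),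
      (∀ p ∈ S', Transversal n k (BF.combine θ (BF.single Z true)) p) ∧
      (↑S' : Set (Fin n × Fin n)).Pairwise IndepPairs ∧
      (3 ≤ S'.card ∨ (k = 1 ∧ 2 ≤ S'.card)) := by
  classical
  obtain ⟨p0, hp0⟩ := Finset.card_pos.1 (show 0 < S.card by omega)
  have hNoCθ : NoC θ := ((tchar hk1 θ p0).1 (hStr p0 hp0)).1
  have hNoC' : NoC (BF.combine θ (BF.single Z true)) := by
    rintro l ⟨i, j, hL, hR⟩
    rw [combine_some_true] at hL hR
    rcases hL with hL | ⟨hLn, hLz⟩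
    · rcases hR with hR | ⟨hRn, hRz⟩
      · exact hNoCθ l ⟨i, j, hL, hR⟩
      · exact hnu l ((isUnit_iff θ Z l).2 ⟨⟨i, j, Or.inl hL,
          Or.inr ⟨hRn, by rw [hRz]; exact single_self⟩⟩, hNoCθ l⟩)
    · rcases hR with hR | ⟨hRn, hRz⟩
      · exact hnu l ((isUnit_iff θ Z l).2 ⟨⟨i, j,
          Or.inr ⟨hLn, by rw [hLz]; exact single_self⟩, Or.inl hR⟩, hNoCθ l⟩)
      · exact LR_ne l i j i j (hLz.trans hRz.symm)
  set kills : (Fin n × Fin n) → Prop := fun p =>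
    (∃ m, m ≤ k+1 ∧ Z = cvar p m) ∨
    (∃ j', ∃ h : 0 < k, Z = HVar.S ⟨0, h⟩ p.1 j') ∨
    (∃ i', ∃ h : k-1 < k, Z = HVar.S ⟨k-1, h⟩ i' p.2) with hkills
  have hsurv : ∀ p ∈ S, ¬ kills p →
      Transversal n k (BF.combine θ (BF.single Z true)) p := by
    intro p hp hnk
    have htP := (tchar hk1 θ p).1 (hStr p hp)
    rw [tchar hk1]
    refine ⟨hNoC', ?_, ?_, ?_⟩
    · obtain ⟨h1, h2, h3⟩ := htP.2.1
      refine ⟨?_, ?_, ?_⟩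
      · rw [combine_none]
        refine ⟨h1, fun he => hnk (Or.inl ⟨0, by omega, ?_⟩)⟩
        rw [cvar_zero]; exact he.symm
      · intro m
        rw [combine_none]
        refine ⟨h2 m, fun he => hnk (Or.inl ⟨m.1+1, by have := m.isLt; omega, ?_⟩)⟩
        rw [cvar_succ]; exact he.symm
      · rw [combine_none]
        refine ⟨h3, fun he => hnk (Or.inl ⟨k+1, le_refl _, ?_⟩)⟩
        rw [cvar_last]; exact he.symm
    · rintro ⟨j', hpos, hs⟩
      rw [combine_some_true] at hs
      rcases hs with hs | ⟨-, hz⟩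
      · exact htP.2.2.1 ⟨j', hpos, hs⟩
      · exact hnk (Or.inr (Or.inl ⟨j', hpos, hz.symm⟩))
    · rintro ⟨i', hpos, hs⟩
      rw [combine_some_true] at hs
      rcases hs with hs | ⟨-, hz⟩
      · exact htP.2.2.2 ⟨i', hpos, hs⟩
      · exact hnk (Or.inr (Or.inr ⟨i', hpos, hz.symm⟩))
  set S' := S.filter (fun p => ¬ kills p) with hS'
  have hsub : S' ⊆ S := Finset.filter_subset _ _
  have hsplit : (S.filter kills).card + S'.card = S.card := by
    rw [hS']
    exact Finset.card_filter_add_card_filter_not (p := kills)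
  have hfstone : ∀ i0 : Fin n, (S.filter (fun p => p.1 = i0)).card ≤ 1 := by
    intro i0
    refine Finset.card_le_one.2 ?_
    intro a ha b hb
    rw [Finset.mem_filter] at ha hb
    by_contra hne
    exact (hSpw (Finset.mem_coe.2 ha.1) (Finset.mem_coe.2 hb.1) hne).1
      (ha.2.trans hb.2.symm)
  have hsndone : ∀ j0 : Fin n, (S.filter (fun p => p.2 = j0)).card ≤ 1 := by
    intro j0
    refine Finset.card_le_one.2 ?_
    intro a ha b hb
    rw [Finset.mem_filter] at ha hb
    by_contra hne
    exact (hSpw (Finset.mem_coe.2 ha.1) (Finset.mem_coe.2 hb.1) hne).2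
      (ha.2.trans hb.2.symm)
  refine ⟨S', fun p hp => hsurv p (hsub hp) (Finset.mem_filter.1 hp).2,
    hSpw.mono (Finset.coe_subset.2 hsub), ?_⟩
  cases Z with
  | R i0 =>
    have hsubk : S.filter kills ⊆ S.filter (fun p => p.1 = i0) := by
      intro p hp
      rw [Finset.mem_filter] at hp ⊢
      refine ⟨hp.1, ?_⟩
      rcases hp.2 with ⟨m, hm, he⟩ | ⟨j', h, he⟩ | ⟨i', h, he⟩
      · exact cvar_eq_R he.symm
      · simp at he
      · simp at he
    have hle := le_trans (Finset.card_le_card hsubk) (hfstone i0)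
    exact Or.inl (by omega)
  | T j0 =>
    have hsubk : S.filter kills ⊆ S.filter (fun p => p.2 = j0) := by
      intro p hp
      rw [Finset.mem_filter] at hp ⊢
      refine ⟨hp.1, ?_⟩
      rcases hp.2 with ⟨m, hm, he⟩ | ⟨j', h, he⟩ | ⟨i', h, he⟩
      · exact cvar_eq_T he.symm
      · simp at he
      · simp at he
    have hle := le_trans (Finset.card_le_card hsubk) (hsndone j0)
    exact Or.inl (by omega)
  | S mm i0 j0 =>
    by_cases hkis1 : k = 1
    · have hsubk : S.filter kills ⊆
          (S.filter (fun p => p.1 = i0)) ∪ (S.filter (fun p => p.2 = j0)) := by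
        intro p hp
        rw [Finset.mem_union, Finset.mem_filter, Finset.mem_filter]
        rw [Finset.mem_filter] at hp
        rcases hp.2 with ⟨m, hm, he⟩ | ⟨j', h, he⟩ | ⟨i', h, he⟩
        · exact Or.inl ⟨hp.1, (cvar_eq_S he.symm).1⟩
        · simp only [HVar.S.injEq] at he
          exact Or.inl ⟨hp.1, he.2.1.symm⟩
        · simp only [HVar.S.injEq] at he
          exact Or.inr ⟨hp.1, he.2.2.symm⟩
      have hle := le_trans (Finset.card_le_card hsubk) (Finset.card_union_le _ _)
      have h1 := hfstone i0
      have h2 := hsndone j0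
      exact Or.inr ⟨hkis1, by omega⟩
    · refine Or.inl ?_
      by_cases hm0 : mm.1 = 0
      · have hsubk : S.filter kills ⊆ S.filter (fun p => p.1 = i0) := by
          intro p hp
          rw [Finset.mem_filter] at hp ⊢
          refine ⟨hp.1, ?_⟩
          rcases hp.2 with ⟨m, hm, he⟩ | ⟨j', h, he⟩ | ⟨i', h, he⟩
          · exact (cvar_eq_S he.symm).1
          · simp only [HVar.S.injEq] at he
            exact he.2.1.symm
          · exfalso
            simp only [HVar.S.injEq] at he
            have := congrArg Fin.val he.1
            simp at this
            omega
        have hle := le_trans (Finset.card_le_card hsubk) (hfstone i0)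
        omega
      · by_cases hmk : mm.1 = k-1
        · have hsubk : S.filter kills ⊆ S.filter (fun p => p.2 = j0) := by
            intro p hp
            rw [Finset.mem_filter] at hp ⊢
            refine ⟨hp.1, ?_⟩
            rcases hp.2 with ⟨m, hm, he⟩ | ⟨j', h, he⟩ | ⟨i', h, he⟩
            · exact (cvar_eq_S he.symm).2
            · exfalso
              simp only [HVar.S.injEq] at he
              have := congrArg Fin.val he.1
              simp at this
              omega
            · simp only [HVar.S.injEq] at he
              exact he.2.2.symm
          have hle := le_trans (Finset.card_le_card hsubk) (hsndone j0)
          omega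
        · have hsubk : S.filter kills ⊆ S.filter (fun p => p.1 = i0) := by
            intro p hp
            rw [Finset.mem_filter] at hp ⊢
            refine ⟨hp.1, ?_⟩
            rcases hp.2 with ⟨m, hm, he⟩ | ⟨j', h, he⟩ | ⟨i', h, he⟩
            · exact (cvar_eq_S he.symm).1
            · exfalso
              simp only [HVar.S.injEq] at he
              have := congrArg Fin.val he.1
              simp at this
              omega
            · exfalso
              simp only [HVar.S.injEq] at he
              have := congrArg Fin.val he.1
              simp at this
              omega
          have hle := le_trans (Finset.card_le_card hsubk) (hfstone i0)
          omega

end HkAux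

/-- If `f` depends on all of its `k+1` variables,
`Ψ = f(H_{k0},…,H_{kk})`, and `Φ = Ψ[θ]` for a `θ` with at least 4 pairwise
independent transversals, then `U_k(Φ) = ⋃_{ℓ} U(H_{kℓ}[θ])`. -/
theorem hk_units_characterization (n k : ℕ) (hn : 1 ≤ n) (hk : 1 ≤ k)
    (f : (Fin (k+1) → Bool) → Bool) (hf : ∀ l, BoolFunDependsOn f l)
    (θ : HVar n k → Option Bool) (hθ : HasIndepTransversals n k θ 4) :
    ∀ Z : HVar n k,
      IsHkUnit n k f Z (BF.restrict (Psi n k f) θ) ↔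
        ∃ l : Fin (k+1), BF.IsUnit Z (BF.restrict (Hfun n k l) θ) := by
  obtain ⟨S, hS4, hStr, hSpw⟩ := hθ
  intro Z
  constructor
  · rintro ⟨htf1, htf2⟩
    by_contra hno
    push_neg at hno
    by_cases hZ : θ Z = none
    · obtain ⟨S', hS'tr, hS'pw, hS'card⟩ :=
        HkAux.survival hk θ Z hZ hno S hS4 hStr hSpw
      apply HkAux.star hk f hf (BF.combine θ (BF.single Z true)) S' hS'tr hS'pw hS'card
      rw [HkAux.restrict_restrict] at htf1
      exact htf1
    · obtain ⟨b, hb⟩ : ∃ b, θ Z = some b := by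
        cases h : θ Z with
        | none => exact absurd h hZ
        | some b => exact ⟨b, rfl⟩
      have heqq : BF.restrict (BF.restrict (Psi n k f) θ) (BF.single Z true)
          = BF.restrict (Psi n k f) θ := by
        funext a
        simp only [BF.restrict]
        congr 1
        funext v
        by_cases hv : v = Z
        · subst hv; rw [hb]; rfl
        · simp [BF.single, hv]
      rw [heqq] at htf1
      exact htf2 htf1
  · rintro ⟨l0, hu⟩
    have huc := (HkAux.isUnit_iff θ Z l0).1 hu
    constructor
    · refine ⟨BF.combine θ (BF.single Z true), (HkAux.restrict_restrict _ _ _).symm, ?_⟩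
      intro p
      rw [HkAux.tchar hk]
      rintro ⟨hnoc', -, -, -⟩
      apply hnoc' l0
      obtain ⟨⟨i, j, hL, hR⟩, -⟩ := huc
      exact ⟨i, j, HkAux.okv_combine hL, HkAux.okv_combine hR⟩
    · exact HkAux.star hk f hf θ S hStr hSpw (Or.inl (by omega))
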